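/- arXiv:1906.08966 — 2 statements merged into one kernel-verified Lean document; each statement's English description precedes it below -/
import Mathlib

section
/- Let ρ ∈ [0,1) and A > 0, and set ζ_{n,ρ} := (ln 2) 2^{−(n+ρ)} k(2^{n+ρ}) / γ(2^{n+ρ+1}). Then there exists a unique family (a_n)_{n∈ℤ} of positive, bounded real numbers solving the recurrence a_{n+1} = ζ_{n,ρ} a_n² for all n ∈ ℤ which satisfies the asymptotics a_n = a_{−∞}(2^{n} + A₀ 2^{2n}) + o(2^{2n}) as n → −∞ for some constant A₀ uniquely determined by A, and a_n / (a_{∞} 2^{(β−α)n} e^{−A 2^{n}}) → 1 as n → +∞, where a_{−∞} := γ₀ 2^{ρ+1}/(k₀ ln 2) and a_{∞} := (ln 2)^{−1} 2^{β} 2^{(β−α)(ρ+1)}. -/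
open Real MeasureTheory Filter Topology Asymptotics

noncomputable section

/-- The assumptions on the coagulation rate function `k` and the fragmentation
rate function `γ`, together with all the fixed structural constants. -/
structure Kernels where
  (α αb k₀ k₁ k₂ β βt βb γ₀ γ₁ γ₂ : ℝ)
  (k γ : ℝ → ℝ)
  hα : 0 < α ∧ α < 1
  hαb : 1 < αb
  hk₀ : 0 < k₀
  hk₁ : 0 < k₁
  hk₂ : 0 < k₂
  hβ : 1 < β ∧ β < 2
  hβt : βt < β
  hβb : 1 < βb
  hγ₀ : 0 < γ₀
  hγ₁ : 0 < γ₁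
  hγ₂ : 0 < γ₂
  hkC2 : ContDiffOn ℝ 2 k (Set.Ioi 0)
  hkpos : ∀ ξ : ℝ, 0 < ξ → 0 < k ξ
  hkInfty : Tendsto (fun ξ : ℝ => k ξ / ξ ^ (α + 1)) atTop (𝓝 1)
  hkZero : (fun ξ : ℝ => k ξ - k₀) =O[𝓝[>] (0:ℝ)] fun ξ : ℝ => ξ ^ αb
  hk'ge : ∀ ξ : ℝ, 1 ≤ ξ → |deriv k ξ| ≤ k₁ * ξ ^ α
  hk'le : ∀ ξ : ℝ, 0 < ξ → ξ ≤ 1 → |deriv k ξ| ≤ k₁ * ξ ^ (αb - 1)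
  hk''ge : ∀ ξ : ℝ, 1 ≤ ξ → |deriv (deriv k) ξ| ≤ k₂ * ξ ^ (α - 1)
  hk''le : ∀ ξ : ℝ, 0 < ξ → ξ ≤ 1 → |deriv (deriv k) ξ| ≤ k₂ * ξ ^ (αb - 2)
  hγC2 : ContDiffOn ℝ 2 γ (Set.Ioi 0)
  hγpos : ∀ ξ : ℝ, 0 < ξ → 0 < γ ξ
  hγInfty : (fun ξ : ℝ => γ ξ - ξ ^ β) =O[atTop] fun ξ : ℝ => ξ ^ βt
  hγZero : (fun ξ : ℝ => γ ξ - γ₀) =O[𝓝[>] (0:ℝ)] fun ξ : ℝ => ξ ^ βb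
  hγ'ge : ∀ ξ : ℝ, 1 ≤ ξ → |deriv γ ξ| ≤ γ₁ * ξ ^ (β - 1)
  hγ'le : ∀ ξ : ℝ, 0 < ξ → ξ ≤ 1 → |deriv γ ξ| ≤ γ₁ * ξ ^ (βb - 1)
  hγ''ge : ∀ ξ : ℝ, 1 ≤ ξ → |deriv (deriv γ) ξ| ≤ γ₂ * ξ ^ (β - 2)
  hγ''le : ∀ ξ : ℝ, 0 < ξ → ξ ≤ 1 → |deriv (deriv γ) ξ| ≤ γ₂ * ξ ^ (βb - 2)

/-- `ζ_n(p) = ln 2 · 2^{-(n+p_n)} k(2^{n+p_n}) / γ(2^{n+1+p_{n+1}})`. -/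
def Kernels.zeta (KD : Kernels) (p : ℤ → ℝ) (n : ℤ) : ℝ :=
  Real.log 2 * (2:ℝ) ^ (-((n:ℝ) + p n)) * KD.k ((2:ℝ) ^ ((n:ℝ) + p n)) /
    KD.γ ((2:ℝ) ^ ((n:ℝ) + 1 + p (n + 1)))

/-- `ζ_{n,ρ}` for a constant shift `ρ`. -/
def Kernels.zetaRho (KD : Kernels) (ρ : ℝ) (n : ℤ) : ℝ := KD.zeta (fun _ => ρ) n

/-- `θ_n(p) = 2 ζ_{n+1}(p)/ζ_n(p)`. -/
def Kernels.thetaSeq (KD : Kernels) (p : ℤ → ℝ) (n : ℤ) : ℝ :=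
  2 * KD.zeta p (n + 1) / KD.zeta p n

/-- `μ̄_n(A,p) = e^{-A 2^n} exp(-2^n Σ_{j=n+1}^∞ 2^{-j} ln θ_{j-1}(p))`. -/
def Kernels.mubar (KD : Kernels) (A : ℝ) (p : ℤ → ℝ) (n : ℤ) : ℝ :=
  Real.exp (-A * (2:ℝ) ^ (n:ℝ)) *
    Real.exp (-((2:ℝ) ^ (n:ℝ)) *
      ∑' j : ℕ, (2:ℝ) ^ (-((n:ℝ) + 1 + (j:ℝ))) * Real.log (KD.thetaSeq p (n + (j:ℤ))))

/-- `m̄_n(A,p) = 2 μ̄_n(A,p) / ζ_n(p)`. -/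
def Kernels.mbar (KD : Kernels) (A : ℝ) (p : ℤ → ℝ) (n : ℤ) : ℝ :=
  2 * KD.mubar A p n / KD.zeta p n

/-- The weighted norm `‖y‖_θ = sup_{n≤0} 2^n |y_n| + sup_{n>0} 2^{θ n} |y_n|`,
valued in `ℝ≥0∞` so that membership in `𝒴_θ` is expressed by `Ynorm θ y < ⊤`. -/
def Ynorm (θ : ℝ) (y : ℤ → ℝ) : ENNReal :=
  (⨆ n : {m : ℤ // m ≤ 0}, ENNReal.ofReal ((2:ℝ) ^ ((n.1 : ℝ)) * |y n.1|)) +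
    ⨆ n : {m : ℤ // 0 < m}, ENNReal.ofReal ((2:ℝ) ^ (θ * (n.1 : ℝ)) * |y n.1|)

/-- Discrete derivative `D⁺_n(y) = y_{n+1} - y_n`. -/
def Dplus (y : ℤ → ℝ) (n : ℤ) : ℝ := y (n + 1) - y n

/-- Admissible test functions: continuous, finite limit at `-∞`, and `φ(x) ≤ C 2^x`
for large `x`. -/
def TestFun (φ : ℝ → ℝ) : Prop :=
  Continuous φ ∧ (∃ L : ℝ, Tendsto φ atBot (𝓝 L)) ∧
    ∃ C x₀ : ℝ, ∀ x : ℝ, x₀ ≤ x → φ x ≤ C * (2:ℝ) ^ x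

/-- Right-hand side of the weak formulation of the coagulation–fragmentation
equation in logarithmic variables, for a kernel `Kl` (in logarithmic variables)
and a fragmentation rate `gam`. -/
def weakRHS (Kl : ℝ → ℝ → ℝ) (gam : ℝ → ℝ) (μ : Measure ℝ) (φ : ℝ → ℝ) : ℝ :=
  Real.log 2 / 2 *
      ∫ y, ∫ z, Kl y z * (φ (Real.logb 2 ((2:ℝ) ^ y + (2:ℝ) ^ z)) - φ y - φ z) ∂μ ∂μ -
    1 / 4 * ∫ y, gam ((2:ℝ) ^ y) * (φ y - 2 * φ (y - 1)) ∂μ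

/-- Weak solution of the coagulation–fragmentation equation in logarithmic
variables on the time set `S`, with initial datum `g₀`. -/
def IsWeakSolutionOn (β : ℝ) (Kl : ℝ → ℝ → ℝ) (gam : ℝ → ℝ) (S : Set ℝ)
    (g₀ : Measure ℝ) (g : ℝ → Measure ℝ) : Prop :=
  g 0 = g₀ ∧
  (∀ t ∈ S, ∫⁻ x, ENNReal.ofReal (1 + (2:ℝ) ^ ((β + 1) * x)) ∂(g t) < ⊤) ∧
  (∀ φ : ℝ → ℝ, TestFun φ → ContinuousOn (fun t => ∫ x, φ x ∂(g t)) S) ∧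
  ∀ φ : ℝ → ℝ, TestFun φ → ∀ t ∈ S,
    HasDerivWithinAt (fun s => ∫ x, φ x ∂(g s)) (weakRHS Kl gam (g t) φ) S t

/-- The structural assumptions on the cut-off `Q` and the full coagulation kernel. -/
structure CoagData extends Kernels where
  Q : ℝ → ℝ
  hQC2 : ContDiff ℝ 2 Q
  hQ0 : ∀ x, 0 ≤ Q x
  hQ1 : Q 0 = 1
  hQeven : ∀ x, Q (-x) = Q x
  hQsupp : Function.support Q ⊆ Set.Ioo (-(1/3) : ℝ) (1/3)

/-- The coagulation kernel `K(ξ,η) = (ξ+η)⁻¹ k((ξ+η)/2) Q(2η/(ξ+η) - 1)`. -/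
def CoagData.K (S : CoagData) (ξ η : ℝ) : ℝ :=
  (ξ + η)⁻¹ * S.k ((ξ + η) / 2) * S.Q (2 * η / (ξ + η) - 1)

/-- The coagulation kernel in logarithmic variables, `K(2^y, 2^z)`. -/
def CoagData.Klog (S : CoagData) (y z : ℝ) : ℝ := S.K ((2:ℝ) ^ y) ((2:ℝ) ^ z)

/-- Truncated coagulation kernel in logarithmic variables:
`K_N(2^y,2^z) = K(2^y,2^z) 1_{y < N - 1/2}`. -/
def CoagData.KlogN (S : CoagData) (N : ℕ) (y z : ℝ) : ℝ :=
  if y < (N:ℝ) - 1/2 then S.Klog y z else 0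

/-- Truncated fragmentation rate: `γ_N(ξ) = γ(ξ) 1_{ξ < 2^{N+1/2}}`. -/
def Kernels.gammaTrunc (KD : Kernels) (N : ℕ) (ξ : ℝ) : ℝ :=
  if ξ < (2:ℝ) ^ ((N:ℝ) + 1/2) then KD.γ ξ else 0

/-- `m_n(t)` : the mass of the measure in the interval `I_n = (n-δ₀, n+δ₀)`. -/
def mIn (δ₀ : ℝ) (μ : Measure ℝ) (n : ℤ) : ℝ :=
  (μ (Set.Ioo ((n:ℝ) - δ₀) ((n:ℝ) + δ₀))).toReal

/-- `p_n(t)` : normalized first moment of the measure around the peak `n`. -/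
def pIn (δ₀ : ℝ) (μ : Measure ℝ) (n : ℤ) : ℝ :=
  (mIn δ₀ μ n)⁻¹ * ∫ x in Set.Ioo ((n:ℝ) - δ₀) ((n:ℝ) + δ₀), (x - (n:ℝ)) ∂μ

/-- `q_n(t)` : normalized second moment of the measure around the peak `n`. -/
def qIn (δ₀ : ℝ) (μ : Measure ℝ) (n : ℤ) : ℝ :=
  (mIn δ₀ μ n)⁻¹ *
    ∫ x in Set.Ioo ((n:ℝ) - δ₀) ((n:ℝ) + δ₀), (x - (n:ℝ) - pIn δ₀ μ n) ^ 2 ∂μ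

/-- `m_n⁰ = μ([n-1/2, n+1/2))`. -/
def mhalf (μ : Measure ℝ) (n : ℤ) : ℝ :=
  (μ (Set.Ico ((n:ℝ) - 1/2) ((n:ℝ) + 1/2))).toReal

/-- `p_n⁰ = (m_n⁰)⁻¹ ∫_{[n-1/2,n+1/2)} (x-n) dμ`. -/
def phalf (μ : Measure ℝ) (n : ℤ) : ℝ :=
  (mhalf μ n)⁻¹ * ∫ x in Set.Ico ((n:ℝ) - 1/2) ((n:ℝ) + 1/2), (x - (n:ℝ)) ∂μ

/-- The measure is supported in `∪_{n∈ℤ} (n-δ₀, n+δ₀)`. -/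
def suppInPeaks (δ₀ : ℝ) (μ : Measure ℝ) : Prop :=
  μ ((⋃ n : ℤ, Set.Ioo ((n:ℝ) - δ₀) ((n:ℝ) + δ₀))ᶜ) = 0

/-- Characterization of the stationary peak coefficients `a_n(A,ρ)`:
positive, bounded, solving the recurrence `a_{n+1} = ζ_{n,ρ} a_n²`, with
`a_n = O(2^n)` as `n → -∞` and `a_n = O(2^{(β-α)n} e^{-A 2^n})` as `n → ∞`. -/
def IsStationaryFamily (KD : Kernels) (A ρ : ℝ) (a : ℤ → ℝ) : Prop :=
  (∀ n, 0 < a n) ∧ (∃ B : ℝ, ∀ n, a n ≤ B) ∧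
  (∀ n : ℤ, a (n + 1) = KD.zetaRho ρ n * a n ^ 2) ∧
  ((fun n : ℤ => a n) =O[atBot] fun n : ℤ => (2:ℝ) ^ (n:ℝ)) ∧
  ((fun n : ℤ => a n) =O[atTop]
    fun n : ℤ => (2:ℝ) ^ ((KD.β - KD.α) * (n:ℝ)) * Real.exp (-A * (2:ℝ) ^ (n:ℝ)))

/-- Hypothesis (⋆) on a time-dependent shift sequence `p(t)` with derivative `p'`. -/
def StarHyp (KD : Kernels) (θb₁ η₀ ν : ℝ) (p p' : ℝ → ℤ → ℝ) : Prop :=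
  (∀ t : ℝ, 0 < t → ∀ n : ℤ, |p t n| ≤ η₀) ∧
  (∀ t : ℝ, 0 < t → ∀ n : ℤ, HasDerivAt (fun s => p s n) (p' t n) t) ∧
  (∀ t : ℝ, 0 < t →
    Ynorm θb₁ (Dplus (p t)) ≤
      ENNReal.ofReal (η₀ * t ^ (-(θb₁ / KD.β)) * Real.exp (-(ν * t) / 2))) ∧
  (∀ t : ℝ, 0 < t →
    Ynorm (θb₁ - KD.β) (p' t) ≤
      ENNReal.ofReal (η₀ * (1 + t ^ (-(θb₁ / KD.β))) * Real.exp (-(ν * t) / 2)))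

/-- Coefficient `σ_n(t)` of the time-dependent linearized problem. -/
def Kernels.sigmaLin (KD : Kernels) (AM : ℝ) (p : ℝ → ℤ → ℝ) (n : ℤ) (t : ℝ) : ℝ :=
  8 * KD.mubar AM (p t) n * KD.γ ((2:ℝ) ^ ((n:ℝ) + 1 + p t (n + 1))) /
    KD.γ ((2:ℝ) ^ ((n:ℝ) + p t n))

/-- Solution of the time-dependent linearized problem with datum `y0` at time `t₀`. -/
def IsLinSol (KD : Kernels) (AM : ℝ) (p : ℝ → ℤ → ℝ) (θ t₀ : ℝ)
    (y0 : ℤ → ℝ) (y : ℝ → ℤ → ℝ) : Prop :=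
  y t₀ = y0 ∧ (∀ t ∈ Set.Ici t₀, Ynorm θ (y t) < ⊤) ∧
    ∀ t ∈ Set.Ici t₀, ∀ n : ℤ,
      HasDerivWithinAt (fun s => y s n)
        (KD.γ ((2:ℝ) ^ ((n:ℝ) + p t n)) / 4 *
          (y t (n - 1) - y t n - KD.sigmaLin AM p n t * (y t n - y t (n + 1))))
        (Set.Ici t₀) t

/-- Coefficient `σ^N_n(t)` of the truncated time-dependent linearized problem. -/
def Kernels.sigmaLinT (KD : Kernels) (AM : ℝ) (N : ℤ) (p : ℝ → ℤ → ℝ) (n : ℤ) (t : ℝ) : ℝ :=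
  if n < N then KD.sigmaLin AM p n t else 0

/-- Solution of the truncated time-dependent linearized problem. -/
def IsLinSolTrunc (KD : Kernels) (AM : ℝ) (N : ℤ) (p : ℝ → ℤ → ℝ) (θ t₀ : ℝ)
    (y0 : ℤ → ℝ) (y : ℝ → ℤ → ℝ) : Prop :=
  y t₀ = y0 ∧ (∀ t ∈ Set.Ici t₀, Ynorm θ (y t) < ⊤) ∧
    (∀ t ∈ Set.Ici t₀, ∀ n : ℤ, N < n → y t n = 0) ∧
    ∀ t ∈ Set.Ici t₀, ∀ n : ℤ, n ≤ N →
      HasDerivWithinAt (fun s => y s n)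
        (KD.γ ((2:ℝ) ^ ((n:ℝ) + p t n)) / 4 *
          (y t (n - 1) - y t n - KD.sigmaLinT AM N p n t * (y t n - y t (n + 1))))
        (Set.Ici t₀) t

/-- `‖g₀‖ = sup_{n<0} 2^{-n} g₀([n,n+1)) + g₀([0,∞))`, valued in `ℝ≥0∞`. -/
def gnorm (μ : Measure ℝ) : ENNReal :=
  (⨆ n : {m : ℤ // m < 0},
      ENNReal.ofReal ((2:ℝ) ^ (-(n.1 : ℝ))) * μ (Set.Ico ((n.1 : ℝ)) ((n.1 : ℝ) + 1))) +
    μ (Set.Ici (0:ℝ))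

namespace StationaryPeaksAux

/-! ### Basic setup -/

lemma two_rpow_pos (x : ℝ) : 0 < (2:ℝ) ^ x := Real.rpow_pos_of_pos two_pos x

lemma log2_pos : 0 < Real.log 2 := Real.log_pos one_lt_two

variable (KD : Kernels) (ρ : ℝ)

lemma zetaRho_def (n : ℤ) : KD.zetaRho ρ n =
    Real.log 2 * (2:ℝ) ^ (-((n:ℝ) + ρ)) * KD.k ((2:ℝ) ^ ((n:ℝ) + ρ)) /
      KD.γ ((2:ℝ) ^ ((n:ℝ) + 1 + ρ)) := rfl

lemma zetaRho_pos (n : ℤ) : 0 < KD.zetaRho ρ n := by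
  rw [zetaRho_def]
  exact div_pos (mul_pos (mul_pos log2_pos (two_rpow_pos _))
    (KD.hkpos _ (two_rpow_pos _))) (KD.hγpos _ (two_rpow_pos _))

/-- `L n = log ζ_n`. -/
def Lf (n : ℤ) : ℝ := Real.log (KD.zetaRho ρ n)

lemma exp_Lf (n : ℤ) : Real.exp (Lf KD ρ n) = KD.zetaRho ρ n :=
  Real.exp_log (zetaRho_pos KD ρ n)

lemma Lf_eq (n : ℤ) : Lf KD ρ n =
    Real.log (Real.log 2) - ((n:ℝ) + ρ) * Real.log 2
      + Real.log (KD.k ((2:ℝ) ^ ((n:ℝ) + ρ)))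
      - Real.log (KD.γ ((2:ℝ) ^ ((n:ℝ) + 1 + ρ))) := by
  have hk := KD.hkpos _ (two_rpow_pos ((n:ℝ) + ρ))
  have hγ := KD.hγpos _ (two_rpow_pos ((n:ℝ) + 1 + ρ))
  rw [Lf, zetaRho_def, Real.log_div (mul_pos (mul_pos log2_pos (two_rpow_pos _)) hk).ne' (ne_of_gt hγ),
    Real.log_mul (mul_pos log2_pos (two_rpow_pos _)).ne' (ne_of_gt hk),
    Real.log_mul (ne_of_gt log2_pos) (ne_of_gt (two_rpow_pos _)),
    Real.log_rpow two_pos]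
  ring

/-- constants for the `+∞` expansion -/
def cP : ℝ := Real.log (Real.log 2) + (KD.α - KD.β) * ρ * Real.log 2 - KD.β * Real.log 2
def dP : ℝ := (KD.α - KD.β) * Real.log 2

/-- constant for the `-∞` expansion -/
def cM : ℝ := Real.log (Real.log 2 * KD.k₀ / KD.γ₀)

def sf (n : ℤ) : ℝ := Lf KD ρ n - (cP KD ρ + dP KD * (n:ℝ))
def rf (n : ℤ) : ℝ := Lf KD ρ n - (cM KD - ((n:ℝ) + ρ) * Real.log 2)

lemma rf_eq (n : ℤ) : rf KD ρ n =
    (Real.log (KD.k ((2:ℝ) ^ ((n:ℝ) + ρ))) - Real.log KD.k₀)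
      - (Real.log (KD.γ ((2:ℝ) ^ ((n:ℝ) + 1 + ρ))) - Real.log KD.γ₀) := by
  have : cM KD = Real.log (Real.log 2) + Real.log KD.k₀ - Real.log KD.γ₀ := by
    rw [cM, Real.log_div (mul_pos log2_pos KD.hk₀).ne' (ne_of_gt KD.hγ₀),
      Real.log_mul (ne_of_gt log2_pos) (ne_of_gt KD.hk₀)]
  rw [rf, Lf_eq, this]; ring

lemma sf_eq (n : ℤ) : sf KD ρ n =
    Real.log (KD.k ((2:ℝ) ^ ((n:ℝ) + ρ)) / ((2:ℝ) ^ ((n:ℝ) + ρ)) ^ (KD.α + 1))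
      - Real.log (KD.γ ((2:ℝ) ^ ((n:ℝ) + 1 + ρ)) / ((2:ℝ) ^ ((n:ℝ) + 1 + ρ)) ^ KD.β) := by
  have hk := KD.hkpos _ (two_rpow_pos ((n:ℝ) + ρ))
  have hγ := KD.hγpos _ (two_rpow_pos ((n:ℝ) + 1 + ρ))
  rw [Real.log_div (ne_of_gt hk) (ne_of_gt (Real.rpow_pos_of_pos (two_rpow_pos _) _)),
    Real.log_div (ne_of_gt hγ) (ne_of_gt (Real.rpow_pos_of_pos (two_rpow_pos _) _)),
    Real.log_rpow (two_rpow_pos _), Real.log_rpow (two_rpow_pos _),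
    Real.log_rpow two_pos, Real.log_rpow two_pos, sf, Lf_eq, cP, dP]
  ring


lemma intCast_atBot : Filter.Tendsto (fun n : ℤ => (n:ℝ)) Filter.atBot Filter.atBot := by
  refine Filter.tendsto_atBot_atBot.2 (fun b => ⟨⌊b⌋, fun a ha => ?_⟩)
  calc (a:ℝ) ≤ (⌊b⌋:ℝ) := by exact_mod_cast ha
    _ ≤ b := Int.floor_le b

lemma tendsto_xi_atTop (c : ℝ) :
    Filter.Tendsto (fun n : ℤ => (2:ℝ) ^ ((n:ℝ) + c)) Filter.atTop Filter.atTop := by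
  have h1 : Filter.Tendsto (fun n : ℤ => Real.log 2 * ((n:ℝ) + c)) Filter.atTop Filter.atTop :=
    Filter.Tendsto.const_mul_atTop log2_pos
      (Filter.tendsto_atTop_add_const_right _ c tendsto_intCast_atTop_atTop)
  have := Real.tendsto_exp_atTop.comp h1
  refine this.congr fun n => ?_
  simp [Function.comp, Real.rpow_def_of_pos (two_pos)]

lemma tendsto_xi_atBot (c : ℝ) :
    Filter.Tendsto (fun n : ℤ => (2:ℝ) ^ ((n:ℝ) + c)) Filter.atBot (nhds 0) := by
  have h1 : Filter.Tendsto (fun n : ℤ => Real.log 2 * ((n:ℝ) + c)) Filter.atBot Filter.atBot :=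
    Filter.Tendsto.const_mul_atBot log2_pos
      (Filter.tendsto_atBot_add_const_right _ c intCast_atBot)
  have := Real.tendsto_exp_atBot.comp h1
  refine this.congr fun n => ?_
  simp [Function.comp, Real.rpow_def_of_pos (two_pos)]

variable (KD : Kernels) (ρ : ℝ)

lemma gamma_ratio : Filter.Tendsto (fun ξ : ℝ => KD.γ ξ / ξ ^ KD.β) Filter.atTop (nhds 1) := by
  have hβ : (0:ℝ) < KD.β - KD.βt := by linarith [KD.hβt]
  have h0 : Filter.Tendsto (fun ξ : ℝ => (KD.γ ξ - ξ ^ KD.β) / ξ ^ KD.β) Filter.atTop (nhds 0) := by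
    have hO : (fun ξ : ℝ => (KD.γ ξ - ξ ^ KD.β) / ξ ^ KD.β) =O[Filter.atTop]
        fun ξ : ℝ => ξ ^ (KD.βt - KD.β) := by
      have := KD.hγInfty.mul (Asymptotics.isBigO_refl (fun ξ : ℝ => ξ ^ (-KD.β)) Filter.atTop)
      refine Asymptotics.IsBigO.congr' (this) ?_ ?_
      · filter_upwards [Filter.eventually_gt_atTop (0:ℝ)] with ξ hξ
        rw [Real.rpow_neg hξ.le, div_eq_mul_inv]
      · filter_upwards [Filter.eventually_gt_atTop (0:ℝ)] with ξ hξ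
        rw [← Real.rpow_add hξ, sub_eq_add_neg]
    refine hO.trans_tendsto ?_
    have := tendsto_rpow_neg_atTop hβ
    refine this.congr fun ξ => by rw [neg_sub]
  have h1 := h0.add (tendsto_const_nhds (x := (1:ℝ)))
  rw [zero_add] at h1
  refine h1.congr' ?_
  filter_upwards [Filter.eventually_gt_atTop (0:ℝ)] with ξ hξ
  have : ξ ^ KD.β ≠ 0 := (Real.rpow_pos_of_pos hξ _).ne'
  field_simp
  ring

lemma sf_tendsto : Filter.Tendsto (sf KD ρ) Filter.atTop (nhds 0) := by
  have hX : Filter.Tendsto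
      (fun n : ℤ => KD.k ((2:ℝ) ^ ((n:ℝ) + ρ)) / ((2:ℝ) ^ ((n:ℝ) + ρ)) ^ (KD.α + 1))
      Filter.atTop (nhds 1) := KD.hkInfty.comp (tendsto_xi_atTop ρ)
  have hY : Filter.Tendsto
      (fun n : ℤ => KD.γ ((2:ℝ) ^ ((n:ℝ) + 1 + ρ)) / ((2:ℝ) ^ ((n:ℝ) + 1 + ρ)) ^ KD.β)
      Filter.atTop (nhds 1) := by
    have := (gamma_ratio KD).comp (tendsto_xi_atTop (1 + ρ))
    refine this.congr fun n => ?_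
    simp [Function.comp, add_assoc]
  have hlog : ContinuousAt Real.log 1 := Real.continuousAt_log one_ne_zero
  have hX' := (hlog.tendsto.comp hX)
  have hY' := (hlog.tendsto.comp hY)
  rw [Real.log_one] at hX' hY'
  have := hX'.sub hY'
  rw [sub_zero] at this
  refine this.congr fun n => ?_
  rw [sf_eq]; rfl

lemma abs_log_le {x : ℝ} (hx : 1/2 ≤ x) : |Real.log x| ≤ 2 * |x - 1| := by
  have hx0 : (0:ℝ) < x := lt_of_lt_of_le (by norm_num) hx
  rcases le_or_gt 1 x with h | h
  · rw [abs_of_nonneg (Real.log_nonneg h), abs_of_nonneg (by linarith)]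
    have := Real.log_le_sub_one_of_pos hx0; linarith
  · rw [abs_of_nonpos (Real.log_nonpos hx0.le h.le), abs_of_neg (by linarith)]
    have h1 : -Real.log x = Real.log x⁻¹ := (Real.log_inv x).symm
    have h2 : Real.log x⁻¹ ≤ x⁻¹ - 1 := Real.log_le_sub_one_of_pos (by positivity)
    have h3 : x⁻¹ - 1 ≤ 2 * (1 - x) := by
      have hinv : x * x⁻¹ = 1 := mul_inv_cancel₀ hx0.ne'
      nlinarith [sq_nonneg (2*x - 1)]
    linarith

/-- From a big-O near `0⁺` for a positive function, get a bound on the log-difference. -/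
lemma log_bound_near_zero {f : ℝ → ℝ} {f₀ p : ℝ} (hf₀ : 0 < f₀) (hp : 0 < p)
    (hfpos : ∀ ξ : ℝ, 0 < ξ → 0 < f ξ)
    (h : (fun ξ : ℝ => f ξ - f₀) =O[nhdsWithin 0 (Set.Ioi 0)] fun ξ : ℝ => ξ ^ p) :
    ∃ ε > 0, ∃ C ≥ 0, ∀ ξ : ℝ, 0 < ξ → ξ < ε →
      |Real.log (f ξ) - Real.log f₀| ≤ C * ξ ^ p := by
  obtain ⟨C₀, hC₀⟩ := h.bound
  rw [eventually_nhdsWithin_iff, Metric.eventually_nhds_iff] at hC₀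
  obtain ⟨ε₀, hε₀, hC₀⟩ := hC₀
  set C₁ : ℝ := max C₀ 1 with hC₁def
  have hC₁ : (0:ℝ) < C₁ := lt_of_lt_of_le one_pos (le_max_right _ _)
  set δ : ℝ := (f₀ / (2 * C₁)) ^ p⁻¹ with hδdef
  have hδpos : 0 < δ := Real.rpow_pos_of_pos (by positivity) _
  refine ⟨min ε₀ δ, lt_min hε₀ hδpos, 2 * C₁ / f₀, by positivity, fun ξ hξ hξε => ?_⟩
  have hξε₀ : ξ < ε₀ := lt_of_lt_of_le hξε (min_le_left _ _)
  have hξδ : ξ < δ := lt_of_lt_of_le hξε (min_le_right _ _)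
  have hb : |f ξ - f₀| ≤ C₁ * ξ ^ p := by
    have := hC₀ (show dist ξ 0 < ε₀ by rw [Real.dist_eq, sub_zero, abs_of_pos hξ]; exact hξε₀) hξ
    calc |f ξ - f₀| = ‖f ξ - f₀‖ := rfl
      _ ≤ C₀ * ‖ξ ^ p‖ := this
      _ ≤ C₁ * ξ ^ p := by
          rw [Real.norm_eq_abs, abs_of_pos (Real.rpow_pos_of_pos hξ _)]
          exact mul_le_mul_of_nonneg_right (le_max_left _ _)
            (Real.rpow_pos_of_pos hξ _).le
  have hsmall : C₁ * ξ ^ p ≤ f₀ / 2 := by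
    have h1 : ξ ^ p ≤ δ ^ p := Real.rpow_le_rpow hξ.le hξδ.le hp.le
    have h2 : δ ^ p = f₀ / (2 * C₁) := Real.rpow_inv_rpow (by positivity) hp.ne'
    calc C₁ * ξ ^ p ≤ C₁ * δ ^ p := mul_le_mul_of_nonneg_left h1 hC₁.le
      _ = f₀ / 2 := by rw [h2]; field_simp
  have hfx := hfpos ξ hξ
  have hratio : 1/2 ≤ f ξ / f₀ := by
    rw [le_div_iff₀ hf₀]
    have : |f ξ - f₀| ≤ f₀ / 2 := hb.trans hsmall
    have := abs_le.1 this
    linarith [this.1]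
  have hlog : Real.log (f ξ) - Real.log f₀ = Real.log (f ξ / f₀) :=
    (Real.log_div hfx.ne' hf₀.ne').symm
  rw [hlog]
  calc |Real.log (f ξ / f₀)| ≤ 2 * |f ξ / f₀ - 1| := abs_log_le hratio
    _ = 2 * |f ξ - f₀| / f₀ := by
        rw [div_sub_one hf₀.ne', abs_div, abs_of_pos hf₀]; ring
    _ ≤ 2 * (C₁ * ξ ^ p) / f₀ := by
        have := hb
        gcongr
    _ = 2 * C₁ / f₀ * ξ ^ p := by ring


def cE (KD : Kernels) : ℝ := min KD.αb KD.βb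

lemma cE_gt_one (KD : Kernels) : 1 < cE KD := lt_min KD.hαb KD.hβb

lemma rf_bound (hρ : 0 ≤ ρ ∧ ρ < 1) :
    ∃ N₀ : ℤ, N₀ ≤ 0 ∧ ∃ C : ℝ, 0 ≤ C ∧
      ∀ n : ℤ, n ≤ N₀ → |rf KD ρ n| ≤ C * (2:ℝ) ^ (cE KD * (n:ℝ)) := by
  obtain ⟨ε₁, hε₁, C₁, hC₁, hkb⟩ :=
    log_bound_near_zero KD.hk₀ (lt_trans one_pos KD.hαb) KD.hkpos KD.hkZero
  obtain ⟨ε₂, hε₂, C₂, hC₂, hγb⟩ :=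
    log_bound_near_zero KD.hγ₀ (lt_trans one_pos KD.hβb) KD.hγpos KD.hγZero
  have h1 : ∀ᶠ n : ℤ in Filter.atBot, (2:ℝ) ^ ((n:ℝ) + ρ) < ε₁ :=
    (tendsto_xi_atBot ρ).eventually_lt_const hε₁
  have h2 : ∀ᶠ n : ℤ in Filter.atBot, (2:ℝ) ^ ((n:ℝ) + 1 + ρ) < ε₂ := by
    have := (tendsto_xi_atBot (1 + ρ)).eventually_lt_const hε₂
    refine this.mono fun n hn => ?_
    rwa [← add_assoc] at hn
  have h3 : ∀ᶠ n : ℤ in Filter.atBot, n ≤ 0 := Filter.eventually_le_atBot 0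
  obtain ⟨N₀, hN₀⟩ := Filter.eventually_atBot.1 ((h1.and h2).and h3)
  have hαE : cE KD ≤ KD.αb := min_le_left _ _
  have hβE : cE KD ≤ KD.βb := min_le_right _ _
  have hα1 : (1:ℝ) < KD.αb := KD.hαb
  have hβ1 : (1:ℝ) < KD.βb := KD.hβb
  refine ⟨N₀, (hN₀ N₀ le_rfl).2, C₁ * (2:ℝ) ^ KD.αb + C₂ * (2:ℝ) ^ (2 * KD.βb),
    by positivity, fun n hn => ?_⟩
  obtain ⟨⟨hn1, hn2⟩, hn3⟩ := hN₀ n hn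
  have hnR : (n:ℝ) ≤ 0 := by exact_mod_cast hn3
  have hb1 : |Real.log (KD.k ((2:ℝ) ^ ((n:ℝ) + ρ))) - Real.log KD.k₀|
      ≤ C₁ * ((2:ℝ) ^ ((n:ℝ) + ρ)) ^ KD.αb := hkb _ (two_rpow_pos _) hn1
  have hb2 : |Real.log (KD.γ ((2:ℝ) ^ ((n:ℝ) + 1 + ρ))) - Real.log KD.γ₀|
      ≤ C₂ * ((2:ℝ) ^ ((n:ℝ) + 1 + ρ)) ^ KD.βb := hγb _ (two_rpow_pos _) hn2
  have he1 : ((2:ℝ) ^ ((n:ℝ) + ρ)) ^ KD.αb ≤ (2:ℝ) ^ KD.αb * (2:ℝ) ^ (cE KD * (n:ℝ)) := by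
    rw [← Real.rpow_mul (by norm_num), ← Real.rpow_add two_pos]
    refine Real.rpow_le_rpow_of_exponent_le one_le_two ?_
    nlinarith [mul_nonneg (sub_nonneg.2 hαE) (neg_nonneg.2 hnR), hρ.1, hρ.2]
  have he2 : ((2:ℝ) ^ ((n:ℝ) + 1 + ρ)) ^ KD.βb
      ≤ (2:ℝ) ^ (2 * KD.βb) * (2:ℝ) ^ (cE KD * (n:ℝ)) := by
    rw [← Real.rpow_mul (by norm_num), ← Real.rpow_add two_pos]
    refine Real.rpow_le_rpow_of_exponent_le one_le_two ?_
    nlinarith [mul_nonneg (sub_nonneg.2 hβE) (neg_nonneg.2 hnR), hρ.1, hρ.2]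
  calc |rf KD ρ n| ≤ |Real.log (KD.k ((2:ℝ) ^ ((n:ℝ) + ρ))) - Real.log KD.k₀|
        + |Real.log (KD.γ ((2:ℝ) ^ ((n:ℝ) + 1 + ρ))) - Real.log KD.γ₀| := by
        rw [rf_eq]; exact abs_sub _ _
    _ ≤ C₁ * ((2:ℝ) ^ KD.αb * (2:ℝ) ^ (cE KD * (n:ℝ)))
        + C₂ * ((2:ℝ) ^ (2 * KD.βb) * (2:ℝ) ^ (cE KD * (n:ℝ))) := by
        refine add_le_add (hb1.trans ?_) (hb2.trans ?_)
        · exact mul_le_mul_of_nonneg_left he1 hC₁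
        · exact mul_le_mul_of_nonneg_left he2 hC₂
    _ = (C₁ * (2:ℝ) ^ KD.αb + C₂ * (2:ℝ) ^ (2 * KD.βb)) * (2:ℝ) ^ (cE KD * (n:ℝ)) := by ring

lemma Lf_linear_bound (hρ : 0 ≤ ρ ∧ ρ < 1) :
    ∃ C : ℝ, 0 ≤ C ∧ ∀ n : ℤ, |Lf KD ρ n| ≤ C * (1 + |(n:ℝ)|) := by
  obtain ⟨N₀, hN₀0, C, hC, hrf⟩ := rf_bound KD ρ hρ
  have hs : ∀ᶠ n : ℤ in Filter.atTop, ‖sf KD ρ n‖ < 1 :=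
    NormedAddCommGroup.tendsto_nhds_zero.1 (sf_tendsto KD ρ) 1 one_pos
  obtain ⟨M, hM⟩ := Filter.eventually_atTop.1 hs
  set Cmid : ℝ := ∑ j ∈ Finset.Icc N₀ M, |Lf KD ρ j| with hCmid
  have hCmid0 : 0 ≤ Cmid := Finset.sum_nonneg fun j _ => abs_nonneg _
  set Ctot : ℝ := (|cP KD ρ| + |dP KD| + 1)
      + (|cM KD| + Real.log 2 + ρ * Real.log 2 + C) + Cmid with hCtot
  have hρ0 := hρ.1
  have hlg := log2_pos
  have hCtot0 : 0 ≤ Ctot := by positivity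
  refine ⟨Ctot, hCtot0, fun n => ?_⟩
  have h1n : (1:ℝ) ≤ 1 + |(n:ℝ)| := by simp [abs_nonneg]
  rcases le_or_gt n N₀ with hn | hn
  · -- n ≤ N₀ : use rf bound
    have hnR : (n:ℝ) ≤ 0 := by
      have : n ≤ 0 := le_trans hn hN₀0
      exact_mod_cast this
    have h2 : (2:ℝ) ^ (cE KD * (n:ℝ)) ≤ 1 :=
      Real.rpow_le_one_of_one_le_of_nonpos one_le_two
        (mul_nonpos_of_nonneg_of_nonpos (le_of_lt (lt_trans one_pos (cE_gt_one KD))) hnR)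
    have hrfn : |rf KD ρ n| ≤ C := by
      refine (hrf n hn).trans ?_
      calc C * (2:ℝ) ^ (cE KD * (n:ℝ)) ≤ C * 1 := mul_le_mul_of_nonneg_left h2 hC
        _ = C := mul_one C
    have : |Lf KD ρ n| ≤ |rf KD ρ n| + |cM KD| + (|(n:ℝ)| + ρ) * Real.log 2 := by
      have hLf : Lf KD ρ n = rf KD ρ n + cM KD - ((n:ℝ) + ρ) * Real.log 2 := by
        rw [rf]; ring
      rw [hLf]
      have habs : |((n:ℝ) + ρ) * Real.log 2| ≤ (|(n:ℝ)| + ρ) * Real.log 2 := by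
        rw [abs_mul, abs_of_pos hlg]
        refine mul_le_mul_of_nonneg_right ((abs_add_le _ _).trans ?_) hlg.le
        rw [abs_of_nonneg hρ0]
      calc |rf KD ρ n + cM KD - ((n:ℝ) + ρ) * Real.log 2|
          ≤ |rf KD ρ n + cM KD| + |((n:ℝ) + ρ) * Real.log 2| := abs_sub _ _
        _ ≤ |rf KD ρ n| + |cM KD| + (|(n:ℝ)| + ρ) * Real.log 2 := by
            have := abs_add_le (rf KD ρ n) (cM KD); linarith
    refine this.trans ?_
    have hexp : |rf KD ρ n| + |cM KD| + (|(n:ℝ)| + ρ) * Real.log 2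
        ≤ (|cM KD| + Real.log 2 + ρ * Real.log 2 + C) * (1 + |(n:ℝ)|) := by
      have han : 0 ≤ |(n:ℝ)| := abs_nonneg _
      nlinarith [hrfn, abs_nonneg (rf KD ρ n), mul_nonneg han hlg.le,
        mul_nonneg han (abs_nonneg (cM KD)), mul_nonneg han (mul_nonneg hρ0 hlg.le),
        mul_nonneg han hC]
    refine hexp.trans ?_
    have : (|cM KD| + Real.log 2 + ρ * Real.log 2 + C) ≤ Ctot := by
      rw [hCtot]; linarith [abs_nonneg (cP KD ρ), abs_nonneg (dP KD), abs_nonneg (cM KD), hCmid0, hC, mul_nonneg hρ0 hlg.le, hlg.le]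
    exact mul_le_mul_of_nonneg_right this (by linarith)
  · rcases le_or_gt M n with hn' | hn'
    · -- M ≤ n : use sf bound
      have hsf : |sf KD ρ n| ≤ 1 := (le_of_lt (hM n hn'))
      have hLf : Lf KD ρ n = sf KD ρ n + cP KD ρ + dP KD * (n:ℝ) := by rw [sf]; ring
      have : |Lf KD ρ n| ≤ 1 + |cP KD ρ| + |dP KD| * |(n:ℝ)| := by
        rw [hLf]
        calc |sf KD ρ n + cP KD ρ + dP KD * (n:ℝ)|
            ≤ |sf KD ρ n + cP KD ρ| + |dP KD * (n:ℝ)| := abs_add_le _ _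
          _ ≤ |sf KD ρ n| + |cP KD ρ| + |dP KD| * |(n:ℝ)| := by
              rw [abs_mul]; have := abs_add_le (sf KD ρ n) (cP KD ρ); linarith
          _ ≤ 1 + |cP KD ρ| + |dP KD| * |(n:ℝ)| := by linarith
      refine this.trans ?_
      have h2 : 1 + |cP KD ρ| + |dP KD| * |(n:ℝ)|
          ≤ (|cP KD ρ| + |dP KD| + 1) * (1 + |(n:ℝ)|) := by
        nlinarith [abs_nonneg (cP KD ρ), abs_nonneg (dP KD), abs_nonneg ((n:ℝ))]
      refine h2.trans ?_
      have : (|cP KD ρ| + |dP KD| + 1) ≤ Ctot := by rw [hCtot]; linarith [abs_nonneg (cP KD ρ), abs_nonneg (dP KD), abs_nonneg (cM KD), hCmid0, hC, mul_nonneg hρ0 hlg.le, hlg.le]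
      exact mul_le_mul_of_nonneg_right this (by linarith)
    · -- middle range
      have hmem : n ∈ Finset.Icc N₀ M := Finset.mem_Icc.2 ⟨le_of_lt hn, le_of_lt hn'⟩
      have : |Lf KD ρ n| ≤ Cmid :=
        Finset.single_le_sum (fun j _ => abs_nonneg (Lf KD ρ j)) hmem
      refine this.trans ?_
      calc Cmid ≤ Ctot := by rw [hCtot]; linarith [abs_nonneg (cP KD ρ), abs_nonneg (dP KD), abs_nonneg (cM KD), hCmid0, hC, mul_nonneg hρ0 hlg.le, hlg.le]
        _ = Ctot * 1 := (mul_one _).symm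
        _ ≤ Ctot * (1 + |(n:ℝ)|) := mul_le_mul_of_nonneg_left h1n hCtot0

/-! ### Weights -/

def wgt (m : ℕ) : ℝ := (1/2:ℝ)^m * (1/2)

lemma wgt_pos (m : ℕ) : 0 < wgt m := by unfold wgt; positivity

lemma summable_wgt : Summable wgt :=
  (summable_geometric_of_lt_one (by norm_num) (by norm_num)).mul_right _

lemma tsum_wgt : ∑' m : ℕ, wgt m = 1 := by
  have h1 : (fun m : ℕ => wgt m) = fun m : ℕ => (1/2:ℝ)^m * (1/2) := rfl
  rw [h1, tsum_mul_right, tsum_geometric_of_lt_one (by norm_num) (by norm_num)]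
  norm_num

lemma summable_mul_wgt : Summable (fun m : ℕ => (m:ℝ) * wgt m) := by
  have h := (summable_pow_mul_geometric_of_norm_lt_one (R := ℝ) 1
    (r := (1/2:ℝ)) (by norm_num)).mul_right (1/2:ℝ)
  refine h.congr fun m => ?_
  simp [wgt]; ring

lemma tsum_mul_wgt : ∑' m : ℕ, (m:ℝ) * wgt m = 1 := by
  have h1 : (fun m : ℕ => (m:ℝ) * wgt m) = fun m : ℕ => ((m:ℝ) * (1/2:ℝ)^m) * (1/2) := by
    funext m; rw [wgt]; ring
  rw [h1, tsum_mul_right, tsum_coe_mul_geometric_of_norm_lt_one (by norm_num : ‖(1/2:ℝ)‖ < 1)]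
  norm_num

lemma wgt_rpow (m : ℕ) : wgt m = (2:ℝ) ^ (-((m:ℝ)+1)) := by
  have h1 : (2:ℝ) ^ (-((m:ℝ)+1)) = ((2:ℝ) ^ ((m:ℝ)+1))⁻¹ := Real.rpow_neg (by norm_num) _
  have h2 : (2:ℝ) ^ ((m:ℝ)+1) = (2:ℝ) ^ (m+1 : ℕ) := by
    rw [← Real.rpow_natCast 2 (m+1)]; push_cast; ring_nf
  rw [h1, h2, wgt, one_div, inv_pow, ← mul_inv, ← pow_succ]

variable (KD : Kernels) (ρ : ℝ)

lemma summable_wgt_mul {g : ℤ → ℝ} {Cg : ℝ} (hCg : 0 ≤ Cg)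
    (hg : ∀ j : ℤ, |g j| ≤ Cg * (1 + |(j:ℝ)|)) (n : ℤ) :
    Summable fun m : ℕ => wgt m * g (n + m) := by
  refine Summable.of_norm_bounded (g :=
    fun m => Cg * (1 + |(n:ℝ)|) * wgt m + Cg * ((m:ℝ) * wgt m)) ?_ ?_
  · exact (summable_wgt.mul_left _).add (summable_mul_wgt.mul_left _)
  · intro m
    have h1 : ‖wgt m * g (n + m)‖ = wgt m * |g (n + m)| := by
      rw [Real.norm_eq_abs, abs_mul, abs_of_pos (wgt_pos m)]
    have h2 : |g (n + m)| ≤ Cg * (1 + |(n:ℝ)| + (m:ℝ)) := by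
      refine (hg _).trans ?_
      have hc : |((n + (m:ℤ) : ℤ):ℝ)| ≤ |(n:ℝ)| + (m:ℝ) := by
        push_cast
        refine (abs_add_le _ _).trans ?_
        simp [Nat.abs_cast]
      have := mul_le_mul_of_nonneg_left (add_le_add_left hc 1) hCg
      linarith [this]
    rw [h1]
    calc wgt m * |g (n + m)| ≤ wgt m * (Cg * (1 + |(n:ℝ)| + (m:ℝ))) :=
          mul_le_mul_of_nonneg_left h2 (wgt_pos m).le
      _ = Cg * (1 + |(n:ℝ)|) * wgt m + Cg * ((m:ℝ) * wgt m) := by ring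

lemma tsum_wgt_linear (c d : ℝ) (n : ℤ) :
    ∑' m : ℕ, wgt m * (c + d * ((n:ℝ) + (m:ℝ))) = c + d * ((n:ℝ) + 1) := by
  have h1 : Summable fun m : ℕ => (c + d * (n:ℝ)) * wgt m := summable_wgt.mul_left _
  have h2 : Summable fun m : ℕ => d * ((m:ℝ) * wgt m) := summable_mul_wgt.mul_left _
  have h3 : (fun m : ℕ => wgt m * (c + d * ((n:ℝ) + (m:ℝ))))
      = fun m : ℕ => (c + d * (n:ℝ)) * wgt m + d * ((m:ℝ) * wgt m) := by
    funext m; ring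
  rw [h3, Summable.tsum_add h1 h2, tsum_mul_left, tsum_mul_left, tsum_wgt, tsum_mul_wgt]; ring

/-! ### The series `T` -/

def Tf (n : ℤ) : ℝ := ∑' m : ℕ, wgt m * Lf KD ρ (n + m)

lemma sf_linear_bound (hρ : 0 ≤ ρ ∧ ρ < 1) :
    ∃ C : ℝ, 0 ≤ C ∧ ∀ j : ℤ, |sf KD ρ j| ≤ C * (1 + |(j:ℝ)|) := by
  obtain ⟨CL, hCL0, hCL⟩ := Lf_linear_bound KD ρ hρ
  refine ⟨CL + |cP KD ρ| + |dP KD|,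
    by linarith [abs_nonneg (cP KD ρ), abs_nonneg (dP KD)], fun j => ?_⟩
  have h1 : |sf KD ρ j| ≤ |Lf KD ρ j| + |cP KD ρ| + |dP KD| * |(j:ℝ)| := by
    rw [sf]
    calc |Lf KD ρ j - (cP KD ρ + dP KD * (j:ℝ))|
        ≤ |Lf KD ρ j| + |cP KD ρ + dP KD * (j:ℝ)| := abs_sub _ _
      _ ≤ |Lf KD ρ j| + (|cP KD ρ| + |dP KD| * |(j:ℝ)|) := by
          have := abs_add_le (cP KD ρ) (dP KD * (j:ℝ))
          rw [abs_mul] at this; linarith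
      _ = _ := by ring
  refine h1.trans ?_
  have := hCL j
  nlinarith [abs_nonneg ((j:ℝ)), abs_nonneg (cP KD ρ), abs_nonneg (dP KD),
    mul_nonneg hCL0 (abs_nonneg ((j:ℝ)))]

lemma rf_linear_bound (hρ : 0 ≤ ρ ∧ ρ < 1) :
    ∃ C : ℝ, 0 ≤ C ∧ ∀ j : ℤ, |rf KD ρ j| ≤ C * (1 + |(j:ℝ)|) := by
  obtain ⟨CL, hCL0, hCL⟩ := Lf_linear_bound KD ρ hρ
  have hlg := log2_pos
  refine ⟨CL + |cM KD| + ρ * Real.log 2 + Real.log 2,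
    by linarith [abs_nonneg (cM KD), mul_nonneg hρ.1 hlg.le, hlg.le], fun j => ?_⟩
  have h1 : |rf KD ρ j| ≤ |Lf KD ρ j| + |cM KD| + (|(j:ℝ)| + ρ) * Real.log 2 := by
    rw [rf]
    calc |Lf KD ρ j - (cM KD - ((j:ℝ) + ρ) * Real.log 2)|
        ≤ |Lf KD ρ j| + |cM KD - ((j:ℝ) + ρ) * Real.log 2| := abs_sub _ _
      _ ≤ |Lf KD ρ j| + (|cM KD| + |((j:ℝ) + ρ)| * Real.log 2) := by
          have h2 := abs_sub (cM KD) (((j:ℝ) + ρ) * Real.log 2)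
          rw [abs_mul, abs_of_pos hlg] at h2; linarith
      _ ≤ _ := by
          have h3 : |(j:ℝ) + ρ| ≤ |(j:ℝ)| + ρ := by
            refine (abs_add_le _ _).trans ?_
            rw [abs_of_nonneg hρ.1]
          have := mul_le_mul_of_nonneg_right h3 hlg.le
          linarith
  refine h1.trans ?_
  have := hCL j
  nlinarith [abs_nonneg ((j:ℝ)), abs_nonneg (cM KD),
    mul_nonneg (abs_nonneg ((j:ℝ))) hlg.le, mul_nonneg hρ.1 hlg.le,
    mul_nonneg hCL0 (abs_nonneg ((j:ℝ)))]

lemma summable_Lf (hρ : 0 ≤ ρ ∧ ρ < 1) (n : ℤ) :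
    Summable fun m : ℕ => wgt m * Lf KD ρ (n + m) := by
  obtain ⟨CL, hCL0, hCL⟩ := Lf_linear_bound KD ρ hρ
  exact summable_wgt_mul hCL0 hCL n

lemma summable_sf (hρ : 0 ≤ ρ ∧ ρ < 1) (n : ℤ) :
    Summable fun m : ℕ => wgt m * sf KD ρ (n + m) := by
  obtain ⟨C, hC0, hC⟩ := sf_linear_bound KD ρ hρ
  exact summable_wgt_mul hC0 hC n

lemma summable_rf (hρ : 0 ≤ ρ ∧ ρ < 1) (n : ℤ) :
    Summable fun m : ℕ => wgt m * rf KD ρ (n + m) := by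
  obtain ⟨C, hC0, hC⟩ := rf_linear_bound KD ρ hρ
  exact summable_wgt_mul hC0 hC n

lemma Tf_rec (hρ : 0 ≤ ρ ∧ ρ < 1) (n : ℤ) :
    Tf KD ρ (n+1) = 2 * Tf KD ρ n - Lf KD ρ n := by
  have key : 2 * Tf KD ρ n = Lf KD ρ n + Tf KD ρ (n+1) := by
    calc 2 * Tf KD ρ n = ∑' m : ℕ, 2 * (wgt m * Lf KD ρ (n + m)) := tsum_mul_left.symm
      _ = 2 * (wgt 0 * Lf KD ρ (n + (0:ℕ)))
          + ∑' m : ℕ, 2 * (wgt (m+1) * Lf KD ρ (n + ((m+1 : ℕ)))) :=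
          Summable.tsum_eq_zero_add ((summable_Lf KD ρ hρ n).mul_left 2)
      _ = Lf KD ρ n + Tf KD ρ (n+1) := by
          congr 1
          · norm_num [wgt]; ring
          · rw [Tf]
            refine tsum_congr fun m => ?_
            have harg : n + ((m+1 : ℕ) : ℤ) = (n+1) + (m : ℕ) := by push_cast; ring
            rw [harg, wgt, wgt]; ring
  linarith

lemma Tf_plus (hρ : 0 ≤ ρ ∧ ρ < 1) (n : ℤ) :
    Tf KD ρ n = cP KD ρ + dP KD * ((n:ℝ) + 1) + ∑' m : ℕ, wgt m * sf KD ρ (n + m) := by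
  have hlin : Summable fun m : ℕ => wgt m * (cP KD ρ + dP KD * ((n:ℝ) + (m:ℝ))) := by
    have hb : ∀ j : ℤ, |cP KD ρ + dP KD * (j:ℝ)| ≤ (|cP KD ρ| + |dP KD|) * (1 + |(j:ℝ)|) := by
      intro j
      have h1 := abs_add_le (cP KD ρ) (dP KD * (j:ℝ))
      rw [abs_mul] at h1
      nlinarith [abs_nonneg (cP KD ρ), abs_nonneg (dP KD), abs_nonneg ((j:ℝ))]
    have := summable_wgt_mul (g := fun j : ℤ => cP KD ρ + dP KD * (j:ℝ))
      (by positivity) hb n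
    refine this.congr fun m => ?_
    push_cast; ring_nf
  have hsplit : (fun m : ℕ => wgt m * Lf KD ρ (n + m))
      = fun m : ℕ => wgt m * (cP KD ρ + dP KD * ((n:ℝ) + (m:ℝ))) + wgt m * sf KD ρ (n + m) := by
    funext m
    have : Lf KD ρ (n + m) = cP KD ρ + dP KD * ((n:ℝ) + (m:ℝ)) + sf KD ρ (n + m) := by
      rw [sf]; push_cast; ring
    rw [this]; ring
  rw [Tf, hsplit, Summable.tsum_add hlin (summable_sf KD ρ hρ n), tsum_wgt_linear]

lemma Tf_minus (hρ : 0 ≤ ρ ∧ ρ < 1) (n : ℤ) :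
    Tf KD ρ n = cM KD - ((n:ℝ) + 1 + ρ) * Real.log 2
      + ∑' m : ℕ, wgt m * rf KD ρ (n + m) := by
  have hlin : Summable fun m : ℕ =>
      wgt m * ((cM KD - ρ * Real.log 2) + (-Real.log 2) * ((n:ℝ) + (m:ℝ))) := by
    have hb : ∀ j : ℤ, |(cM KD - ρ * Real.log 2) + (-Real.log 2) * (j:ℝ)|
        ≤ (|cM KD - ρ * Real.log 2| + Real.log 2) * (1 + |(j:ℝ)|) := by
      intro j
      have h1 := abs_add_le (cM KD - ρ * Real.log 2) ((-Real.log 2) * (j:ℝ))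
      rw [abs_mul, abs_neg, abs_of_pos log2_pos] at h1
      nlinarith [abs_nonneg (cM KD - ρ * Real.log 2), log2_pos.le, abs_nonneg ((j:ℝ))]
    have := summable_wgt_mul
      (g := fun j : ℤ => (cM KD - ρ * Real.log 2) + (-Real.log 2) * (j:ℝ))
      (by positivity) hb n
    refine this.congr fun m => ?_
    push_cast; ring_nf
  have hsplit : (fun m : ℕ => wgt m * Lf KD ρ (n + m))
      = fun m : ℕ => wgt m * ((cM KD - ρ * Real.log 2) + (-Real.log 2) * ((n:ℝ) + (m:ℝ)))
        + wgt m * rf KD ρ (n + m) := by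
    funext m
    have : Lf KD ρ (n + m) = (cM KD - ρ * Real.log 2) + (-Real.log 2) * ((n:ℝ) + (m:ℝ))
        + rf KD ρ (n + m) := by
      rw [rf]; push_cast; ring
    rw [this]; ring
  rw [Tf, hsplit, Summable.tsum_add hlin (summable_rf KD ρ hρ n), tsum_wgt_linear]
  ring

lemma Ssf_tendsto (hρ : 0 ≤ ρ ∧ ρ < 1) :
    Filter.Tendsto (fun n : ℤ => ∑' m : ℕ, wgt m * sf KD ρ (n + m))
      Filter.atTop (nhds 0) := by
  rw [NormedAddCommGroup.tendsto_nhds_zero]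
  intro ε hε
  obtain ⟨M, hM⟩ := Filter.eventually_atTop.1
    (NormedAddCommGroup.tendsto_nhds_zero.1 (sf_tendsto KD ρ) (ε/2) (by positivity))
  rw [Filter.eventually_atTop]
  refine ⟨M, fun n hn => ?_⟩
  have hsum := summable_sf KD ρ hρ n
  have habs : ∀ m : ℕ, ‖wgt m * sf KD ρ (n + m)‖ ≤ wgt m * (ε/2) := by
    intro m
    rw [Real.norm_eq_abs, abs_mul, abs_of_pos (wgt_pos m)]
    refine mul_le_mul_of_nonneg_left ?_ (wgt_pos m).le
    have : M ≤ n + m := le_trans hn (by omega)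
    exact le_of_lt (hM _ this)
  calc ‖∑' m : ℕ, wgt m * sf KD ρ (n + m)‖
      ≤ ∑' m : ℕ, ‖wgt m * sf KD ρ (n + m)‖ := norm_tsum_le_tsum_norm hsum.abs
    _ ≤ ∑' m : ℕ, wgt m * (ε/2) := Summable.tsum_le_tsum habs hsum.abs (summable_wgt.mul_right _)
    _ = ε/2 := by rw [tsum_mul_right, tsum_wgt, one_mul]
    _ < ε := by linarith

/-! ### The series `U` at `-∞` -/

def vf (j : ℤ) : ℝ := (2:ℝ) ^ (-(j:ℝ) - 1) * rf KD ρ j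

def Uf (n : ℤ) : ℝ := ∑' m : ℕ, vf KD ρ (n + m)

lemma wgt_mul_eq_vf (n : ℤ) (m : ℕ) :
    wgt m * rf KD ρ (n + m) = (2:ℝ) ^ ((n:ℝ)) * vf KD ρ (n + m) := by
  rw [vf, wgt_rpow, ← mul_assoc, ← Real.rpow_add two_pos]
  have : -((m:ℝ)+1) = (n:ℝ) + (-(((n + (m:ℕ) : ℤ)):ℝ) - 1) := by push_cast; ring
  rw [this]

lemma summable_vf (hρ : 0 ≤ ρ ∧ ρ < 1) (n : ℤ) :
    Summable fun m : ℕ => vf KD ρ (n + m) := by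
  have h := (summable_rf KD ρ hρ n).mul_left ((2:ℝ) ^ (-(n:ℝ)))
  refine h.congr fun m => ?_
  rw [wgt_mul_eq_vf, ← mul_assoc, ← Real.rpow_add two_pos]
  simp

lemma Rn_eq_Uf (hρ : 0 ≤ ρ ∧ ρ < 1) (n : ℤ) :
    ∑' m : ℕ, wgt m * rf KD ρ (n + m) = (2:ℝ) ^ ((n:ℝ)) * Uf KD ρ n := by
  rw [Uf, ← tsum_mul_left]
  exact tsum_congr (wgt_mul_eq_vf KD ρ n)

lemma Uf_tendsto (hρ : 0 ≤ ρ ∧ ρ < 1) :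
    ∃ S : ℝ, Filter.Tendsto (Uf KD ρ) Filter.atBot (nhds S) := by
  obtain ⟨N₀, hN₀0, C, hC0, hrfb⟩ := rf_bound KD ρ hρ
  have hcE1 : (0:ℝ) < cE KD - 1 := by linarith [cE_gt_one KD]
  set q : ℝ := (2:ℝ) ^ (-(cE KD - 1)) with hq
  have hq0 : 0 < q := two_rpow_pos _
  have hq1 : q < 1 := Real.rpow_lt_one_of_one_lt_of_neg one_lt_two (by linarith)
  have hvfb : ∀ j : ℤ, j ≤ N₀ → |vf KD ρ j| ≤ C * (2:ℝ) ^ ((cE KD - 1) * (j:ℝ) - 1) := by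
    intro j hj
    rw [vf, abs_mul, abs_of_pos (two_rpow_pos _)]
    calc (2:ℝ) ^ (-(j:ℝ) - 1) * |rf KD ρ j|
        ≤ (2:ℝ) ^ (-(j:ℝ) - 1) * (C * (2:ℝ) ^ (cE KD * (j:ℝ))) :=
          mul_le_mul_of_nonneg_left (hrfb j hj) (two_rpow_pos _).le
      _ = C * ((2:ℝ) ^ (-(j:ℝ) - 1) * (2:ℝ) ^ (cE KD * (j:ℝ))) := by ring
      _ = C * (2:ℝ) ^ ((cE KD - 1) * (j:ℝ) - 1) := by
          rw [← Real.rpow_add two_pos,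
            show (-(j:ℝ) - 1) + cE KD * (j:ℝ) = (cE KD - 1) * (j:ℝ) - 1 from by ring]
  set g : ℕ → ℝ := fun m => vf KD ρ (N₀ - 1 - m) with hg
  have hgsum : Summable g := by
    refine Summable.of_norm_bounded (g :=
      fun m => (C * (2:ℝ) ^ ((cE KD - 1) * ((N₀:ℝ) - 1) - 1)) * q ^ m) ?_ ?_
    · exact (summable_geometric_of_lt_one hq0.le hq1).mul_left _
    · intro m
      have hj : N₀ - 1 - (m:ℤ) ≤ N₀ := by omega
      refine (hvfb _ hj).trans (le_of_eq ?_)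
      have : (2:ℝ) ^ ((cE KD - 1) * ((N₀ - 1 - (m:ℤ) : ℤ):ℝ) - 1)
          = (2:ℝ) ^ ((cE KD - 1) * ((N₀:ℝ) - 1) - 1) * q ^ m := by
        rw [hq, ← Real.rpow_natCast ((2:ℝ) ^ (-(cE KD - 1))) m,
          ← Real.rpow_mul (by norm_num), ← Real.rpow_add two_pos]
        push_cast; ring_nf
      rw [this]; ring
  have hkey : ∀ n : ℤ, n ≤ N₀ →
      Uf KD ρ n = (∑ m ∈ Finset.range ((N₀ - n).toNat), g m) + Uf KD ρ N₀ := by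
    intro n hn
    set k : ℕ := (N₀ - n).toNat with hk
    have hkZ : (k:ℤ) = N₀ - n := Int.toNat_of_nonneg (by omega)
    have hsplit := (summable_vf KD ρ hρ n).sum_add_tsum_nat_add k
    have htail : ∑' m : ℕ, vf KD ρ (n + ((m + k : ℕ):ℤ)) = Uf KD ρ N₀ := by
      rw [Uf]
      refine tsum_congr fun m => ?_
      congr 1; push_cast; omega
    have hhead : ∑ m ∈ Finset.range k, vf KD ρ (n + m) = ∑ m ∈ Finset.range k, g m := by
      have hrefl := Finset.sum_range_reflect (fun j : ℕ => vf KD ρ (n + j)) k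
      rw [← hrefl]
      refine Finset.sum_congr rfl fun j hj => ?_
      rw [Finset.mem_range] at hj
      rw [hg]
      congr 1
      have h1 : ((k - 1 - j : ℕ):ℤ) = (k:ℤ) - 1 - j := by omega
      rw [h1]; omega
    rw [Uf, ← hsplit, hhead, htail]
  refine ⟨(∑' m : ℕ, g m) + Uf KD ρ N₀, ?_⟩
  have hcomp : Filter.Tendsto (fun n : ℤ => (N₀ - n).toNat) Filter.atBot Filter.atTop := by
    rw [Filter.tendsto_atTop]
    intro b
    rw [Filter.eventually_atBot]
    exact ⟨N₀ - b, fun n hn => by omega⟩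
  have hpart := (hgsum.hasSum.tendsto_sum_nat).comp hcomp
  have := hpart.add_const (Uf KD ρ N₀)
  refine Filter.Tendsto.congr' ?_ this
  filter_upwards [Filter.eventually_le_atBot N₀] with n hn
  exact (hkey n hn).symm

/-! ### The sequence `a` -/

variable (A : ℝ)

def bf (n : ℤ) : ℝ := -(A * (2:ℝ) ^ ((n:ℝ))) - Tf KD ρ n

def af (n : ℤ) : ℝ := Real.exp (bf KD ρ A n)

lemma af_pos (n : ℤ) : 0 < af KD ρ A n := Real.exp_pos _

lemma af_rec (hρ : 0 ≤ ρ ∧ ρ < 1) (n : ℤ) :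
    af KD ρ A (n+1) = KD.zetaRho ρ n * af KD ρ A n ^ 2 := by
  have hb : bf KD ρ A (n+1) = bf KD ρ A n + bf KD ρ A n + Lf KD ρ n := by
    rw [bf, bf, Tf_rec KD ρ hρ n]
    have hcast : (((n+1:ℤ)):ℝ) = (n:ℝ)+1 := by push_cast; ring
    rw [hcast, Real.rpow_add two_pos, Real.rpow_one]
    ring
  rw [af, af, hb, Real.exp_add, Real.exp_add, exp_Lf, sq]
  ring

/-! ### behaviour at `+∞` -/

def aInf : ℝ := (Real.log 2)⁻¹ * (2:ℝ) ^ KD.β * (2:ℝ) ^ ((KD.β - KD.α) * (ρ + 1))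

lemma aInf_pos : 0 < aInf KD ρ := by
  have := log2_pos
  rw [aInf]
  positivity

lemma log_aInf : Real.log (aInf KD ρ) = -(Real.log (Real.log 2))
    + KD.β * Real.log 2 + (KD.β - KD.α) * (ρ + 1) * Real.log 2 := by
  rw [aInf, Real.log_mul (by positivity) (two_rpow_pos _).ne',
    Real.log_mul (by simpa using log2_pos.ne') (two_rpow_pos _).ne',
    Real.log_inv, Real.log_rpow two_pos, Real.log_rpow two_pos]

def Dcomp (n : ℤ) : ℝ := aInf KD ρ *
  ((2:ℝ) ^ ((KD.β - KD.α) * (n:ℝ)) * Real.exp (-A * (2:ℝ) ^ ((n:ℝ))))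

lemma Dcomp_pos (n : ℤ) : 0 < Dcomp KD ρ A n :=
  mul_pos (aInf_pos KD ρ) (mul_pos (two_rpow_pos _) (Real.exp_pos _))

lemma Dcomp_exp (n : ℤ) : Dcomp KD ρ A n =
    Real.exp (Real.log (aInf KD ρ) + Real.log 2 * ((KD.β - KD.α) * (n:ℝ))
      + (-A * (2:ℝ) ^ ((n:ℝ)))) := by
  rw [Real.exp_add, Real.exp_add, Real.exp_log (aInf_pos KD ρ),
    ← Real.rpow_def_of_pos two_pos, Dcomp]
  ring

lemma af_div_Dcomp (hρ : 0 ≤ ρ ∧ ρ < 1) (n : ℤ) :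
    af KD ρ A n / Dcomp KD ρ A n
      = Real.exp (-(∑' m : ℕ, wgt m * sf KD ρ (n + m))) := by
  rw [Dcomp_exp, af, ← Real.exp_sub]
  congr 1
  rw [bf, Tf_plus KD ρ hρ n, log_aInf, cP, dP]
  ring

lemma af_tendsto_one (hρ : 0 ≤ ρ ∧ ρ < 1) :
    Filter.Tendsto (fun n : ℤ => af KD ρ A n / Dcomp KD ρ A n)
      Filter.atTop (nhds 1) := by
  have h0 := (Ssf_tendsto KD ρ hρ).neg
  rw [neg_zero] at h0
  have h1 := (Real.continuous_exp.tendsto 0).comp h0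
  simp only [Real.exp_zero] at h1
  exact h1.congr fun n => (af_div_Dcomp KD ρ A hρ n).symm

/-- quadratic lower bound on `exp` -/
lemma quarter_sq_le_exp {y : ℝ} (hy : 0 ≤ y) : y^2/4 ≤ Real.exp y := by
  have h1 : Real.exp y = Real.exp (y/2) * Real.exp (y/2) := by
    rw [← Real.exp_add]; ring_nf
  have h2 : y/2 + 1 ≤ Real.exp (y/2) := Real.add_one_le_exp _
  nlinarith [Real.exp_pos (y/2)]

lemma tendsto_lin_sub_exp (c : ℝ) (hA : 0 < A) :
    Filter.Tendsto (fun n : ℤ => c * (n:ℝ) - A * (2:ℝ) ^ ((n:ℝ)))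
      Filter.atTop Filter.atBot := by
  have hlg := log2_pos
  obtain ⟨n₀, hn₀⟩ := exists_int_gt (max 1 (4 * (|c| + 1) / (A * Real.log 2 ^ 2)))
  have hneg : Filter.Tendsto (fun n : ℤ => -(n:ℝ)) Filter.atTop Filter.atBot :=
    tendsto_neg_atTop_atBot.comp tendsto_intCast_atTop_atTop
  refine tendsto_atBot_mono' Filter.atTop ?_ hneg
  filter_upwards [Filter.eventually_ge_atTop n₀] with n hn
  have hnn₀ : (n₀:ℝ) ≤ (n:ℝ) := by exact_mod_cast hn
  have hn1 : (1:ℝ) ≤ (n:ℝ) := le_trans (le_trans (le_max_left _ _) hn₀.le) hnn₀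
  have hnK : 4 * (|c| + 1) / (A * Real.log 2 ^ 2) ≤ (n:ℝ) :=
    le_trans (le_trans (le_max_right _ _) hn₀.le) hnn₀
  have hy : 0 ≤ (n:ℝ) * Real.log 2 := by positivity
  have hexp : ((n:ℝ) * Real.log 2)^2/4 ≤ (2:ℝ) ^ ((n:ℝ)) := by
    rw [Real.rpow_def_of_pos two_pos, mul_comm (Real.log 2)]
    exact quarter_sq_le_exp hy
  have hK : 4 * (|c| + 1) ≤ (n:ℝ) * (A * Real.log 2 ^ 2) := by
    rw [div_le_iff₀ (by positivity)] at hnK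
    linarith [hnK]
  have habs : c ≤ |c| := le_abs_self c
  have h2 : A * (2:ℝ) ^ ((n:ℝ)) ≥ (|c| + 1) * (n:ℝ) := by
    have := mul_le_mul_of_nonneg_left hexp hA.le
    have hsq : A * (((n:ℝ) * Real.log 2)^2/4) ≥ (|c| + 1) * (n:ℝ) := by
      nlinarith [hK, hn1, sq_nonneg ((n:ℝ) * Real.log 2)]
    linarith
  have : c * (n:ℝ) - A * (2:ℝ) ^ ((n:ℝ)) ≤ -(n:ℝ) := by nlinarith [hn1]
  exact this

lemma Dcomp_tendsto_zero (hρ : 0 ≤ ρ ∧ ρ < 1) (hA : 0 < A) :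
    Filter.Tendsto (Dcomp KD ρ A) Filter.atTop (nhds 0) := by
  have h1 : Filter.Tendsto (fun n : ℤ => Real.log (aInf KD ρ)
      + Real.log 2 * ((KD.β - KD.α) * (n:ℝ)) + (-A * (2:ℝ) ^ ((n:ℝ))))
      Filter.atTop Filter.atBot := by
    have h2 := tendsto_lin_sub_exp A (Real.log 2 * (KD.β - KD.α)) hA
    have h3 := tendsto_atBot_add_const_right Filter.atTop (Real.log (aInf KD ρ)) h2
    refine h3.congr fun n => ?_
    ring
  have := Real.tendsto_exp_atBot.comp h1
  exact this.congr fun n => (Dcomp_exp KD ρ A n).symm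

lemma af_tendsto_zero_top (hρ : 0 ≤ ρ ∧ ρ < 1) (hA : 0 < A) :
    Filter.Tendsto (af KD ρ A) Filter.atTop (nhds 0) := by
  have h := (af_tendsto_one KD ρ A hρ).mul (Dcomp_tendsto_zero KD ρ A hρ hA)
  rw [one_mul] at h
  refine h.congr fun n => ?_
  exact div_mul_cancel₀ _ (Dcomp_pos KD ρ A n).ne'

/-! ### behaviour at `-∞` -/

lemma bf_minus (hρ : 0 ≤ ρ ∧ ρ < 1) (n : ℤ) :
    bf KD ρ A n = (n:ℝ) * Real.log 2 + ((1+ρ) * Real.log 2 - cM KD)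
      + (-(A + Uf KD ρ n) * (2:ℝ) ^ ((n:ℝ))) := by
  rw [bf, Tf_minus KD ρ hρ n, Rn_eq_Uf KD ρ hρ n]
  ring

def aMin : ℝ := KD.γ₀ * (2:ℝ) ^ (ρ + 1) / (KD.k₀ * Real.log 2)

lemma aMin_pos : 0 < aMin KD ρ :=
  div_pos (mul_pos KD.hγ₀ (two_rpow_pos _)) (mul_pos KD.hk₀ log2_pos)

lemma exp_beta_star : Real.exp ((1+ρ) * Real.log 2 - cM KD) = aMin KD ρ := by
  have hlg := log2_pos
  have hpos : 0 < Real.log 2 * KD.k₀ / KD.γ₀ := div_pos (mul_pos hlg KD.hk₀) KD.hγ₀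
  rw [Real.exp_sub, cM, Real.exp_log hpos,
    show (1+ρ) * Real.log 2 = Real.log 2 * (1+ρ) from mul_comm _ _,
    ← Real.rpow_def_of_pos two_pos, aMin, add_comm 1 ρ]
  field_simp

lemma af_minus_eq (hρ : 0 ≤ ρ ∧ ρ < 1) (n : ℤ) :
    af KD ρ A n = aMin KD ρ * (2:ℝ) ^ ((n:ℝ))
      * Real.exp (-(A + Uf KD ρ n) * (2:ℝ) ^ ((n:ℝ))) := by
  rw [af, bf_minus KD ρ A hρ n, Real.exp_add, Real.exp_add, exp_beta_star,
    show (n:ℝ) * Real.log 2 = Real.log 2 * (n:ℝ) from mul_comm _ _,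
    ← Real.rpow_def_of_pos two_pos]
  ring

lemma h2pow_bot : Filter.Tendsto (fun n : ℤ => (2:ℝ) ^ ((n:ℝ))) Filter.atBot (nhds 0) := by
  have := tendsto_xi_atBot 0
  refine this.congr fun n => ?_
  rw [add_zero]

lemma xf_tendsto_zero (hρ : 0 ≤ ρ ∧ ρ < 1) {S : ℝ}
    (hS : Filter.Tendsto (Uf KD ρ) Filter.atBot (nhds S)) :
    Filter.Tendsto (fun n : ℤ => -(A + Uf KD ρ n) * (2:ℝ) ^ ((n:ℝ)))
      Filter.atBot (nhds 0) := by
  have h1 : Filter.Tendsto (fun n : ℤ => -(A + Uf KD ρ n)) Filter.atBot (nhds (-(A+S))) :=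
    ((tendsto_const_nhds.add hS).neg)
  have := h1.mul h2pow_bot
  rw [mul_zero] at this
  exact this

lemma af_tendsto_zero_bot (hρ : 0 ≤ ρ ∧ ρ < 1) {S : ℝ}
    (hS : Filter.Tendsto (Uf KD ρ) Filter.atBot (nhds S)) :
    Filter.Tendsto (af KD ρ A) Filter.atBot (nhds 0) := by
  have hx := xf_tendsto_zero KD ρ A hρ hS
  have hexp := (Real.continuous_exp.tendsto 0).comp hx
  rw [Real.exp_zero] at hexp
  have h1 := (tendsto_const_nhds (x := aMin KD ρ)).mul h2pow_bot
  rw [mul_zero] at h1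
  have := (h1.mul hexp)
  rw [zero_mul] at this
  refine this.congr fun n => ?_
  exact (af_minus_eq KD ρ A hρ n).symm

lemma af_littleo (hρ : 0 ≤ ρ ∧ ρ < 1) (hA : 0 < A) {S : ℝ}
    (hS : Filter.Tendsto (Uf KD ρ) Filter.atBot (nhds S)) :
    (fun n : ℤ => af KD ρ A n - aMin KD ρ *
        ((2:ℝ) ^ ((n:ℝ)) + (-(A + S)) * (2:ℝ) ^ (2 * (n:ℝ))))
      =o[Filter.atBot] fun n : ℤ => (2:ℝ) ^ (2 * (n:ℝ)) := by
  rw [Asymptotics.isLittleO_iff_tendsto (fun n h => absurd h (two_rpow_pos _).ne')]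
  have key : ∀ n : ℤ, (af KD ρ A n - aMin KD ρ *
      ((2:ℝ) ^ ((n:ℝ)) + (-(A + S)) * (2:ℝ) ^ (2 * (n:ℝ)))) / (2:ℝ) ^ (2 * (n:ℝ))
      = aMin KD ρ * ((Real.exp (-(A + Uf KD ρ n) * (2:ℝ) ^ ((n:ℝ))) - 1
          - (-(A + Uf KD ρ n) * (2:ℝ) ^ ((n:ℝ)))) / (2:ℝ) ^ ((n:ℝ))
        + (-(A + Uf KD ρ n) + (A + S))) := by
    intro n
    have h2n : (2:ℝ) ^ (2 * (n:ℝ)) = (2:ℝ) ^ ((n:ℝ)) * (2:ℝ) ^ ((n:ℝ)) := by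
      rw [← Real.rpow_add two_pos]; ring_nf
    have hp := two_rpow_pos ((n:ℝ))
    rw [af_minus_eq KD ρ A hρ n, h2n]
    field_simp
    ring
  have hT2 : Filter.Tendsto (fun n : ℤ => -(A + Uf KD ρ n) + (A + S))
      Filter.atBot (nhds 0) := by
    have h1 : Filter.Tendsto (fun n : ℤ => -(A + Uf KD ρ n)) Filter.atBot (nhds (-(A+S))) :=
      ((tendsto_const_nhds.add hS).neg)
    have := h1.add (tendsto_const_nhds (x := A + S))
    rw [neg_add_cancel] at this
    exact this
  have hT1 : Filter.Tendsto (fun n : ℤ => (Real.exp (-(A + Uf KD ρ n) * (2:ℝ) ^ ((n:ℝ))) - 1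
      - (-(A + Uf KD ρ n) * (2:ℝ) ^ ((n:ℝ)))) / (2:ℝ) ^ ((n:ℝ)))
      Filter.atBot (nhds 0) := by
    have hx := xf_tendsto_zero KD ρ A hρ hS
    have hUb : Filter.Tendsto (fun n : ℤ => (A + Uf KD ρ n)^2 * (2:ℝ) ^ ((n:ℝ)))
        Filter.atBot (nhds 0) := by
      have h1 : Filter.Tendsto (fun n : ℤ => (A + Uf KD ρ n)^2) Filter.atBot
          (nhds ((A+S)^2)) := ((tendsto_const_nhds.add hS).pow 2)
      have := h1.mul h2pow_bot
      rw [mul_zero] at this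
      exact this
    refine squeeze_zero_norm' ?_ hUb
    have hxsmall : ∀ᶠ n : ℤ in Filter.atBot,
        |(-(A + Uf KD ρ n) * (2:ℝ) ^ ((n:ℝ)))| ≤ 1 := by
      have := hx.eventually (Metric.ball_mem_nhds (0:ℝ) one_pos)
      refine this.mono fun n hn => ?_
      rw [Real.dist_eq, sub_zero] at hn
      exact hn.le
    filter_upwards [hxsmall] with n hn
    set x := -(A + Uf KD ρ n) * (2:ℝ) ^ ((n:ℝ)) with hxdef
    have hp := two_rpow_pos ((n:ℝ))
    have hb := Real.abs_exp_sub_one_sub_id_le hn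
    rw [Real.norm_eq_abs, abs_div, abs_of_pos hp, div_le_iff₀ hp]
    calc |Real.exp x - 1 - x| ≤ x^2 := hb
      _ = (A + Uf KD ρ n)^2 * (2:ℝ) ^ ((n:ℝ)) * (2:ℝ) ^ ((n:ℝ)) := by
          rw [hxdef]; ring
  have := (hT1.add hT2).const_mul (aMin KD ρ)
  rw [add_zero, mul_zero] at this
  refine this.congr fun n => (key n).symm

lemma bounded_of_tendsto_zero {f : ℤ → ℝ}
    (h1 : Filter.Tendsto f Filter.atBot (nhds 0))
    (h2 : Filter.Tendsto f Filter.atTop (nhds 0)) : ∃ B : ℝ, ∀ n, f n ≤ B := by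
  obtain ⟨N₁, hN₁⟩ := Filter.eventually_atBot.1
    (NormedAddCommGroup.tendsto_nhds_zero.1 h1 1 one_pos)
  obtain ⟨N₂, hN₂⟩ := Filter.eventually_atTop.1
    (NormedAddCommGroup.tendsto_nhds_zero.1 h2 1 one_pos)
  refine ⟨1 + ∑ j ∈ Finset.Icc N₁ N₂, |f j|, fun n => ?_⟩
  have hsum0 : 0 ≤ ∑ j ∈ Finset.Icc N₁ N₂, |f j| :=
    Finset.sum_nonneg fun _ _ => abs_nonneg _
  rcases le_or_gt n N₁ with h | h
  · have h3 := hN₁ n h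
    rw [Real.norm_eq_abs] at h3
    have := le_abs_self (f n)
    linarith
  rcases le_or_gt N₂ n with h' | h'
  · have h3 := hN₂ n h'
    rw [Real.norm_eq_abs] at h3
    have := le_abs_self (f n)
    linarith
  · have hmem : n ∈ Finset.Icc N₁ N₂ := Finset.mem_Icc.2 ⟨h.le, h'.le⟩
    have h3 := Finset.single_le_sum (f := fun j => |f j|) (fun j _ => abs_nonneg _) hmem
    have := le_abs_self (f n)
    linarith

end StationaryPeaksAux

open StationaryPeaksAux in
/-- existence and uniqueness of the stationary peak coefficients
`a_n` with prescribed fine asymptotics at `±∞` (Proposition 2.3). -/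
theorem stationary_peaks_exists_unique (KD : Kernels) (ρ A : ℝ)
    (hρ : 0 ≤ ρ ∧ ρ < 1) (hA : 0 < A) :
    ∃! a : ℤ → ℝ,
      (∀ n, 0 < a n) ∧
      (∃ B : ℝ, ∀ n, a n ≤ B) ∧
      (∀ n : ℤ, a (n + 1) = KD.zetaRho ρ n * a n ^ 2) ∧
      (∃! A₀ : ℝ,
        (fun n : ℤ =>
            a n - KD.γ₀ * (2:ℝ) ^ (ρ + 1) / (KD.k₀ * Real.log 2) *
              ((2:ℝ) ^ (n:ℝ) + A₀ * (2:ℝ) ^ (2 * (n:ℝ)))) =o[atBot]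
          fun n : ℤ => (2:ℝ) ^ (2 * (n:ℝ))) ∧
      Tendsto (fun n : ℤ =>
          a n / ((Real.log 2)⁻¹ * (2:ℝ) ^ KD.β * (2:ℝ) ^ ((KD.β - KD.α) * (ρ + 1)) *
            ((2:ℝ) ^ ((KD.β - KD.α) * (n:ℝ)) * Real.exp (-A * (2:ℝ) ^ (n:ℝ)))))
        atTop (𝓝 1) := by
  obtain ⟨S, hS⟩ := Uf_tendsto KD ρ hρ
  have hamin := aMin_pos KD ρ
  refine ⟨af KD ρ A, ⟨af_pos KD ρ A, ?_, af_rec KD ρ A hρ, ?_, ?_⟩, ?_⟩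
  · exact bounded_of_tendsto_zero (af_tendsto_zero_bot KD ρ A hρ hS)
      (af_tendsto_zero_top KD ρ A hρ hA)
  · -- the ∃! A₀ statement
    refine ⟨-(A + S), af_littleo KD ρ A hρ hA hS, ?_⟩
    intro A₀' h'
    have hbase : (fun n : ℤ => af KD ρ A n - aMin KD ρ *
        ((2:ℝ) ^ ((n:ℝ)) + (-(A + S)) * (2:ℝ) ^ (2 * (n:ℝ))))
          =o[atBot] (fun n : ℤ => (2:ℝ) ^ (2 * (n:ℝ))) := af_littleo KD ρ A hρ hA hS
    have hdiff := h'.sub hbase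
    have h2 : (fun n : ℤ => (aMin KD ρ * ((-(A + S)) - A₀')) * (2:ℝ) ^ (2 * (n:ℝ)))
        =o[atBot] (fun n : ℤ => (2:ℝ) ^ (2 * (n:ℝ))) := by
      refine hdiff.congr' (Filter.Eventually.of_forall fun n => ?_)
        (Filter.Eventually.of_forall fun n => rfl)
      show af KD ρ A n - _ - (af KD ρ A n - _) = _
      rw [aMin]
      ring
    by_contra hne
    have hKne : aMin KD ρ * ((-(A + S)) - A₀') ≠ 0 := by
      refine mul_ne_zero hamin.ne' ?_
      intro h0
      exact hne (by linarith [sub_eq_zero.1 h0])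
    have hKpos : 0 < |aMin KD ρ * ((-(A + S)) - A₀')| := abs_pos.2 hKne
    rw [Asymptotics.isLittleO_iff] at h2
    obtain ⟨n, hn⟩ := (h2 (half_pos hKpos)).exists
    rw [Real.norm_eq_abs, Real.norm_eq_abs, abs_mul,
      abs_of_pos (two_rpow_pos (2 * (n:ℝ)))] at hn
    have := (mul_le_mul_iff_left₀ (two_rpow_pos (2 * (n:ℝ)))).1 hn
    linarith
  · exact af_tendsto_one KD ρ A hρ
  · -- uniqueness
    rintro a' ⟨hpos', hbdd', hrec', hexu', htend'⟩
    have haf := af_tendsto_one KD ρ A hρ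
    have hr : Tendsto (fun n : ℤ => a' n / af KD ρ A n) atTop (𝓝 1) := by
      have hd := htend'.div haf one_ne_zero
      rw [div_one] at hd
      refine hd.congr fun n => ?_
      have hD := (Dcomp_pos KD ρ A n).ne'
      have hafn := (af_pos KD ρ A n).ne'
      show a' n / Dcomp KD ρ A n / (af KD ρ A n / Dcomp KD ρ A n) = _
      rw [div_div_div_cancel_right₀]
      exact hD
    set t : ℝ := a' 0 / af KD ρ A 0 with ht
    have ht0 : 0 < t := div_pos (hpos' 0) (af_pos KD ρ A 0)
    have hratio_sq : ∀ n : ℤ, a' (n+1) / af KD ρ A (n+1) = (a' n / af KD ρ A n)^2 := by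
      intro n
      have hz := (zetaRho_pos KD ρ n).ne'
      rw [hrec' n, af_rec KD ρ A hρ n, div_pow, mul_div_mul_left _ _ hz]
    have hpow : ∀ m : ℕ, a' (m:ℤ) / af KD ρ A (m:ℤ) = t ^ (2^m) := by
      intro m
      induction m with
      | zero => simp [ht]
      | succ m ih =>
        have hc : ((m+1:ℕ):ℤ) = (m:ℤ) + 1 := by push_cast; ring
        rw [hc, hratio_sq (m:ℤ), ih, ← pow_mul, pow_succ]
    have hnat : Tendsto (fun m : ℕ => ((m:ℤ))) atTop atTop :=
      tendsto_natCast_atTop_atTop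
    have hlim : Tendsto (fun m : ℕ => t ^ (2^m)) atTop (𝓝 1) := by
      have := hr.comp hnat
      refine this.congr fun m => ?_
      exact hpow m
    have ht1 : t = 1 := by
      rcases lt_trichotomy t 1 with hlt | heq | hgt
      · exfalso
        have hle : ∀ m : ℕ, t ^ (2^m) ≤ t := by
          intro m
          calc t ^ (2^m) ≤ t ^ 1 :=
              pow_le_pow_of_le_one ht0.le hlt.le Nat.one_le_two_pow
            _ = t := pow_one t
        have := le_of_tendsto hlim (Filter.Eventually.of_forall hle)
        linarith
      · exact heq
      · exfalso
        have hle : ∀ m : ℕ, t ≤ t ^ (2^m) := by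
          intro m
          calc t = t ^ 1 := (pow_one t).symm
            _ ≤ t ^ (2^m) := pow_le_pow_right₀ hgt.le Nat.one_le_two_pow
        have := ge_of_tendsto hlim (Filter.Eventually.of_forall hle)
        linarith
    have h0 : a' 0 = af KD ρ A 0 := by
      have hq : a' 0 / af KD ρ A 0 = 1 := by rw [← ht, ht1]
      have := (div_eq_one_iff_eq (b := af KD ρ A 0) (af_pos KD ρ A 0).ne').1 hq
      exact this
    funext n
    refine Int.induction_on n h0 (fun i hi => ?_) (fun i hi => ?_)
    · rw [hrec' i, af_rec KD ρ A hρ i, hi]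
    · have hz := (zetaRho_pos KD ρ (-(i:ℤ)-1)).ne'
      have e1 := hrec' (-(i:ℤ)-1)
      have e2 := af_rec KD ρ A hρ (-(i:ℤ)-1)
      rw [show -(i:ℤ)-1+1 = -(i:ℤ) from by ring] at e1 e2
      have h1 : KD.zetaRho ρ (-(i:ℤ)-1) * a' (-(i:ℤ)-1)^2
          = KD.zetaRho ρ (-(i:ℤ)-1) * af KD ρ A (-(i:ℤ)-1)^2 := by
        rw [← e1, ← e2, hi]
      have h2 : a' (-(i:ℤ)-1)^2 = af KD ρ A (-(i:ℤ)-1)^2 := mul_left_cancel₀ hz h1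
      have hp1 := hpos' (-(i:ℤ)-1)
      have hp2 := af_pos KD ρ A (-(i:ℤ)-1)
      have h3 : (a' (-(i:ℤ)-1) - af KD ρ A (-(i:ℤ)-1))
          * (a' (-(i:ℤ)-1) + af KD ρ A (-(i:ℤ)-1)) = 0 := by
        linear_combination h2
      rcases mul_eq_zero.1 h3 with h4 | h4
      · exact sub_eq_zero.1 h4
      · exfalso; linarith
end
end

section
/- Let A > 0, δ₀ ∈ (0,1), and let p = (p_n)_{n∈ℤ} be a sequence with |p_n| ≤ δ₀ for all n. Then the family (m̄_n(A,p))_{n∈ℤ} is well defined, consists of positive bounded numbers, solves the recurrence m̄_{n+1}(A,p) = ζ_n(p) m̄_n(A,p)² for all n ∈ ℤ, and satisfies m̄_n(A,p) = O(2^{n}) as n → −∞ and m̄_n(A,p) = O(2^{(β−α)n} e^{−A 2^{n}}) as n → +∞. Moreover ∂m̄_n/∂A = −2^{n} m̄_n, ∂m̄_n/∂p_k = 0 for k < n, and |∂m̄_n/∂p_k| ≤ c 2^{n−k} m̄_n for k ≥ n, for a constant c > 0 depending only on the kernels. -/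
open Real MeasureTheory Filter Topology Asymptotics

noncomputable section

namespace MbarAux
open Real Filter Set

lemma two_rpow_pos (x : ℝ) : 0 < (2:ℝ) ^ x := Real.rpow_pos_of_pos two_pos x

lemma log_two_pos : 0 < Real.log 2 := Real.log_pos one_lt_two

/-- two-sided sandwich bound for a kernel-type function -/
lemma sandwich {f : ℝ → ℝ} {s f₀ : ℝ} (hs : 0 < s) (hf0 : 0 < f₀)
    (hcont : ContinuousOn f (Set.Ioi 0)) (hpos : ∀ ξ : ℝ, 0 < ξ → 0 < f ξ)
    (htop : ∀ᶠ ξ : ℝ in atTop, |f ξ - ξ ^ s| ≤ ξ ^ s / 2)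
    (hzero : Tendsto f (𝓝[>] (0:ℝ)) (𝓝 f₀)) :
    ∃ c C : ℝ, 0 < c ∧ ∀ ξ : ℝ, 0 < ξ →
      c * max 1 (ξ ^ s) ≤ f ξ ∧ f ξ ≤ C * max 1 (ξ ^ s) := by
  have h0 : ∀ᶠ ξ in 𝓝[>] (0:ℝ), f ξ ∈ Set.Ioo (f₀/2) (2*f₀) :=
    hzero (Ioo_mem_nhds (by linarith) (by linarith))
  obtain ⟨u, hu, hsub⟩ := mem_nhdsGT_iff_exists_Ioc_subset.1 h0
  have hu0 : (0:ℝ) < u := hu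
  set r : ℝ := min u 1 with hrdef
  have hr0 : 0 < r := lt_min hu0 one_pos
  have hr1 : r ≤ 1 := min_le_right _ _
  have hsmall : ∀ ξ : ℝ, 0 < ξ → ξ ≤ r → f₀/2 ≤ f ξ ∧ f ξ ≤ 2*f₀ := by
    intro ξ hξ hξr
    have : ξ ∈ Set.Ioc 0 u := ⟨hξ, hξr.trans (min_le_left _ _)⟩
    have := hsub this
    exact ⟨le_of_lt this.1, le_of_lt this.2⟩
  obtain ⟨R₀, hR₀⟩ := Filter.eventually_atTop.1 htop
  set R : ℝ := max R₀ 1 with hRdef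
  have hR1 : (1:ℝ) ≤ R := le_max_right _ _
  have hlarge : ∀ ξ : ℝ, R ≤ ξ → ξ ^ s / 2 ≤ f ξ ∧ f ξ ≤ 3/2 * ξ ^ s := by
    intro ξ hξ
    have h := hR₀ ξ ((le_max_left _ _).trans hξ)
    rw [abs_le] at h
    constructor <;> nlinarith [h.1, h.2]
  have hrR : r ≤ R := hr1.trans hR1
  have hKne : (Set.Icc r R).Nonempty := ⟨r, le_refl r, hrR⟩
  have hKsub : Set.Icc r R ⊆ Set.Ioi 0 := fun x hx => lt_of_lt_of_le hr0 hx.1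
  obtain ⟨ξa, hξa, hmin⟩ := isCompact_Icc.exists_isMinOn hKne (hcont.mono hKsub)
  obtain ⟨ξb, hξb, hmax⟩ := isCompact_Icc.exists_isMaxOn hKne (hcont.mono hKsub)
  have hfa : 0 < f ξa := hpos _ (hKsub hξa)
  have hRs : (0:ℝ) < R ^ s := Real.rpow_pos_of_pos (lt_of_lt_of_le one_pos hR1) s
  refine ⟨min (min (f₀/2) (1/2)) (f ξa / R ^ s), max (max (2*f₀) (3/2)) (f ξb), ?_, ?_⟩
  · exact lt_min (lt_min (by linarith) (by norm_num)) (div_pos hfa hRs)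
  intro ξ hξ
  set c := min (min (f₀/2) (1/2)) (f ξa / R ^ s) with hcdef
  set C := max (max (2*f₀) (3/2)) (f ξb) with hCdef
  have hc0 : 0 < c := lt_min (lt_min (by linarith) (by norm_num)) (div_pos hfa hRs)
  rcases le_or_gt ξ r with hcase | hcase
  · -- small
    have hmax1 : max 1 (ξ ^ s) = 1 := max_eq_left
      (Real.rpow_le_one (le_of_lt hξ) (hcase.trans hr1) (le_of_lt hs))
    rw [hmax1]
    have := hsmall ξ hξ hcase
    constructor
    · calc c * 1 = c := mul_one c
        _ ≤ f₀/2 := (min_le_left _ _).trans (min_le_left _ _)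
        _ ≤ f ξ := this.1
    · calc f ξ ≤ 2*f₀ := this.2
        _ ≤ C := (le_max_left _ _).trans (le_max_left _ _)
        _ = C * 1 := (mul_one C).symm
  rcases le_or_gt ξ R with hcase2 | hcase2
  · -- middle
    have hmem : ξ ∈ Set.Icc r R := ⟨le_of_lt hcase, hcase2⟩
    have hmaxle : max 1 (ξ ^ s) ≤ R ^ s := by
      refine max_le (Real.one_le_rpow hR1 (le_of_lt hs)) ?_
      exact Real.rpow_le_rpow (le_of_lt hξ) hcase2 (le_of_lt hs)
    have h1le : (1:ℝ) ≤ max 1 (ξ ^ s) := le_max_left _ _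
    constructor
    · calc c * max 1 (ξ ^ s) ≤ (f ξa / R ^ s) * R ^ s := by
            apply mul_le_mul (min_le_right _ _) hmaxle (by linarith) (le_of_lt (div_pos hfa hRs))
        _ = f ξa := div_mul_cancel₀ _ (ne_of_gt hRs)
        _ ≤ f ξ := hmin hmem
    · calc f ξ ≤ f ξb := hmax hmem
        _ = f ξb * 1 := (mul_one _).symm
        _ ≤ C * max 1 (ξ ^ s) := by
            apply mul_le_mul (le_max_right _ _) h1le (by norm_num) ?_
            have : (3/2:ℝ) ≤ C := (le_max_right _ _).trans (le_max_left _ _)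
            linarith
  · -- large
    have h1ξ : (1:ℝ) ≤ ξ := hR1.trans (le_of_lt hcase2)
    have hmaxeq : max 1 (ξ ^ s) = ξ ^ s := max_eq_right (Real.one_le_rpow h1ξ (le_of_lt hs))
    rw [hmaxeq]
    have := hlarge ξ (le_of_lt hcase2)
    have hξs : 0 < ξ ^ s := Real.rpow_pos_of_pos hξ s
    constructor
    · have hch : c ≤ 1/2 := (min_le_left _ _).trans (min_le_right _ _)
      nlinarith [this.1]
    · have hch : (3/2:ℝ) ≤ C := (le_max_right _ _).trans (le_max_left _ _)
      nlinarith [this.2]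

end MbarAux


namespace MbarAux
open Real Filter Set Asymptotics

lemma k_sandwich (KD : Kernels) : ∃ c C : ℝ, 0 < c ∧ ∀ ξ : ℝ, 0 < ξ →
    c * max 1 (ξ ^ (KD.α + 1)) ≤ KD.k ξ ∧ KD.k ξ ≤ C * max 1 (ξ ^ (KD.α + 1)) := by
  apply sandwich (by linarith [KD.hα.1]) KD.hk₀ KD.hkC2.continuousOn KD.hkpos
  · have h := KD.hkInfty (Ioo_mem_nhds (by norm_num : (1:ℝ)/2 < 1) (by norm_num : (1:ℝ) < 3/2))
    filter_upwards [h, eventually_gt_atTop (0:ℝ)] with ξ hξ hξ0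
    have hp : 0 < ξ ^ (KD.α + 1) := Real.rpow_pos_of_pos hξ0 _
    simp only [Set.mem_preimage, Set.mem_Ioo] at hξ
    rw [div_lt_iff₀ hp, lt_div_iff₀ hp] at hξ
    rw [abs_le]
    constructor <;> nlinarith [hξ.1, hξ.2]
  · have hne : KD.αb ≠ 0 := by linarith [KD.hαb]
    have h2 : Tendsto (fun ξ : ℝ => KD.k ξ - KD.k₀) (𝓝[>] (0:ℝ)) (𝓝 0) := by
      apply KD.hkZero.trans_tendsto
      have hcont : ContinuousAt (fun x : ℝ => x ^ KD.αb) 0 :=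
        Real.continuousAt_rpow_const 0 _ (Or.inr (by linarith [KD.hαb]))
      have : Tendsto (fun x : ℝ => x ^ KD.αb) (𝓝[>] (0:ℝ)) (𝓝 ((0:ℝ) ^ KD.αb)) :=
        hcont.tendsto.mono_left nhdsWithin_le_nhds
      rwa [Real.zero_rpow hne] at this
    have h3 := h2.add_const KD.k₀
    rw [zero_add] at h3
    exact h3.congr (fun ξ => by ring)

lemma γ_sandwich (KD : Kernels) : ∃ c C : ℝ, 0 < c ∧ ∀ ξ : ℝ, 0 < ξ →
    c * max 1 (ξ ^ KD.β) ≤ KD.γ ξ ∧ KD.γ ξ ≤ C * max 1 (ξ ^ KD.β) := by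
  apply sandwich (by linarith [KD.hβ.1]) KD.hγ₀ KD.hγC2.continuousOn KD.hγpos
  · obtain ⟨C, hC⟩ := Asymptotics.isBigO_iff.1 KD.hγInfty
    have h2 : Tendsto (fun ξ : ℝ => ξ ^ (KD.β - KD.βt)) atTop atTop :=
      tendsto_rpow_atTop (by linarith [KD.hβt])
    filter_upwards [hC, h2.eventually_ge_atTop (2*(|C|+1)), eventually_ge_atTop (1:ℝ)]
      with ξ h1 h2' h3
    have hξ0 : (0:ℝ) < ξ := by linarith
    have hβtpos : 0 < ξ ^ KD.βt := Real.rpow_pos_of_pos hξ0 _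
    have hsplit : ξ ^ (KD.β - KD.βt) * ξ ^ KD.βt = ξ ^ KD.β := by
      rw [← Real.rpow_add hξ0]; ring_nf
    have hmul := mul_le_mul_of_nonneg_right h2' (le_of_lt hβtpos)
    rw [hsplit] at hmul
    have hCn : C * ξ ^ KD.βt ≤ |C| * ξ ^ KD.βt :=
      mul_le_mul_of_nonneg_right (le_abs_self C) (le_of_lt hβtpos)
    rw [Real.norm_eq_abs, Real.norm_eq_abs, abs_of_pos hβtpos] at h1
    calc |KD.γ ξ - ξ ^ KD.β| ≤ C * ξ ^ KD.βt := h1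
      _ ≤ ξ ^ KD.β / 2 := by nlinarith
  · have hne : KD.βb ≠ 0 := by linarith [KD.hβb]
    have h2 : Tendsto (fun ξ : ℝ => KD.γ ξ - KD.γ₀) (𝓝[>] (0:ℝ)) (𝓝 0) := by
      apply KD.hγZero.trans_tendsto
      have hcont : ContinuousAt (fun x : ℝ => x ^ KD.βb) 0 :=
        Real.continuousAt_rpow_const 0 _ (Or.inr (by linarith [KD.hβb]))
      have : Tendsto (fun x : ℝ => x ^ KD.βb) (𝓝[>] (0:ℝ)) (𝓝 ((0:ℝ) ^ KD.βb)) :=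
        hcont.tendsto.mono_left nhdsWithin_le_nhds
      rwa [Real.zero_rpow hne] at this
    have h3 := h2.add_const KD.γ₀
    rw [zero_add] at h3
    exact h3.congr (fun ξ => by ring)

/-- lower sandwich bound gives global log-derivative bound -/
lemma logderiv_bound_of_sandwich {f : ℝ → ℝ} {s s' f₁ c : ℝ}
    (hs : 0 < s) (hs' : 0 < s') (hf₁ : 0 ≤ f₁) (hc : 0 < c)
    (hpos : ∀ ξ : ℝ, 0 < ξ → 0 < f ξ)
    (hlow : ∀ ξ : ℝ, 0 < ξ → c * max 1 (ξ ^ s) ≤ f ξ)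
    (h'ge : ∀ ξ : ℝ, 1 ≤ ξ → |deriv f ξ| ≤ f₁ * ξ ^ (s - 1))
    (h'le : ∀ ξ : ℝ, 0 < ξ → ξ ≤ 1 → |deriv f ξ| ≤ f₁ * ξ ^ (s' - 1)) :
    ∀ ξ : ℝ, 0 < ξ → |ξ * deriv f ξ| ≤ ((f₁ + 1) / c) * f ξ := by
  intro ξ hξ
  have habs : |ξ * deriv f ξ| = ξ * |deriv f ξ| := by
    rw [abs_mul, abs_of_pos hξ]
  have hfpos := hpos ξ hξ
  have hmulpow : ∀ t : ℝ, ξ * ξ ^ (t - 1) = ξ ^ t := by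
    intro t
    rw [show t = 1 + (t - 1) by ring, Real.rpow_add hξ, Real.rpow_one]
    ring_nf
  rcases le_or_gt 1 ξ with h1 | h1
  · have hb := h'ge ξ h1
    have hbb : ξ * |deriv f ξ| ≤ f₁ * ξ ^ s := by
      calc ξ * |deriv f ξ| ≤ ξ * (f₁ * ξ ^ (s - 1)) :=
            mul_le_mul_of_nonneg_left hb (le_of_lt hξ)
        _ = f₁ * (ξ * ξ ^ (s - 1)) := by ring
        _ = f₁ * ξ ^ s := by rw [hmulpow]
    have hlow' : c * ξ ^ s ≤ f ξ := by
      calc c * ξ ^ s ≤ c * max 1 (ξ ^ s) :=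
            mul_le_mul_of_nonneg_left (le_max_right _ _) (le_of_lt hc)
        _ ≤ f ξ := hlow ξ hξ
    rw [habs]
    have hξs : 0 < ξ ^ s := Real.rpow_pos_of_pos hξ _
    rw [div_mul_eq_mul_div, le_div_iff₀ hc]
    nlinarith
  · have hb := h'le ξ hξ (le_of_lt h1)
    have hbb : ξ * |deriv f ξ| ≤ f₁ := by
      calc ξ * |deriv f ξ| ≤ ξ * (f₁ * ξ ^ (s' - 1)) :=
            mul_le_mul_of_nonneg_left hb (le_of_lt hξ)
        _ = f₁ * (ξ * ξ ^ (s' - 1)) := by ring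
        _ = f₁ * ξ ^ s' := by rw [hmulpow]
        _ ≤ f₁ * 1 := by
            apply mul_le_mul_of_nonneg_left _ hf₁
            exact Real.rpow_le_one (le_of_lt hξ) (le_of_lt h1) (le_of_lt hs')
        _ = f₁ := mul_one _
    have hlow' : c * 1 ≤ f ξ := by
      calc c * 1 ≤ c * max 1 (ξ ^ s) :=
            mul_le_mul_of_nonneg_left (le_max_left _ _) (le_of_lt hc)
        _ ≤ f ξ := hlow ξ hξ
    rw [habs, div_mul_eq_mul_div, le_div_iff₀ hc]
    nlinarith

/-- log-form of the sandwich bound -/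
lemma log_sandwich {f : ℝ → ℝ} {s c C : ℝ}
    (hs : 0 < s) (hc : 0 < c)
    (hpos : ∀ ξ : ℝ, 0 < ξ → 0 < f ξ)
    (hb : ∀ ξ : ℝ, 0 < ξ → c * max 1 (ξ ^ s) ≤ f ξ ∧ f ξ ≤ C * max 1 (ξ ^ s)) :
    ∀ x : ℝ, |Real.log (f ((2:ℝ) ^ x)) - s * max 0 x * Real.log 2| ≤
      max |Real.log c| |Real.log C| := by
  intro x
  have hx2 : (0:ℝ) < (2:ℝ) ^ x := two_rpow_pos x
  have hC0 : 0 < C := by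
    have h := (hb 1 one_pos)
    have h1 : (0:ℝ) < max 1 ((1:ℝ) ^ s) := lt_max_of_lt_left one_pos
    nlinarith [hpos 1 one_pos, h.2, h1]
  have hfx := hpos _ hx2
  have hmaxpos : (0:ℝ) < max 1 (((2:ℝ) ^ x) ^ s) := lt_max_of_lt_left one_pos
  have hlog : Real.log (max 1 (((2:ℝ) ^ x) ^ s)) = s * max 0 x * Real.log 2 := by
    rcases le_or_gt 0 x with hx | hx
    · have h1 : (1:ℝ) ≤ (2:ℝ) ^ x := Real.one_le_rpow one_le_two hx
      have h2 : (1:ℝ) ≤ ((2:ℝ) ^ x) ^ s := Real.one_le_rpow h1 (le_of_lt hs)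
      rw [max_eq_right h2, ← Real.rpow_mul (by norm_num : (0:ℝ) ≤ 2),
        Real.log_rpow two_pos, max_eq_right hx]
      ring
    · have h1 : (2:ℝ) ^ x ≤ 1 :=
        Real.rpow_le_one_of_one_le_of_nonpos one_le_two (le_of_lt hx)
      have h2 : ((2:ℝ) ^ x) ^ s ≤ 1 := Real.rpow_le_one (le_of_lt hx2) h1 (le_of_lt hs)
      rw [max_eq_left h2, Real.log_one, max_eq_left (le_of_lt hx)]
      ring
  have h1 := Real.log_le_log hfx ((hb _ hx2).2)
  have h2 := Real.log_le_log (by positivity) ((hb _ hx2).1)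
  rw [Real.log_mul (ne_of_gt hC0) (ne_of_gt hmaxpos), hlog] at h1
  rw [Real.log_mul (ne_of_gt hc) (ne_of_gt hmaxpos), hlog] at h2
  rw [abs_le]
  constructor
  · have : -|Real.log c| ≤ Real.log c := neg_abs_le _
    have hm : -(max |Real.log c| |Real.log C|) ≤ -|Real.log c| := by
      simp [le_max_left]
    linarith
  · have : Real.log C ≤ |Real.log C| := le_abs_self _
    have hm : |Real.log C| ≤ max |Real.log c| |Real.log C| := le_max_right _ _
    linarith

end MbarAux


namespace MbarAux
open Real Filter Set

/-- `log ζ_m(p)` -/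
noncomputable def lz (KD : Kernels) (p : ℤ → ℝ) (m : ℤ) : ℝ := Real.log (KD.zeta p m)

/-- weight `2^{-(1+i)}` -/
noncomputable def w (i : ℕ) : ℝ := (2:ℝ) ^ (-(1 + (i:ℝ)))

/-- `T'_n(p) = Σ_i 2^{-(1+i)} log ζ_{n+i}(p)` -/
noncomputable def Tp (KD : Kernels) (p : ℤ → ℝ) (n : ℤ) : ℝ :=
  ∑' i : ℕ, w i * lz KD p (n + (i:ℤ))

lemma w_pos (i : ℕ) : 0 < w i := two_rpow_pos _

lemma w_eq (i : ℕ) : w i = (1/2) * (1/2)^i := by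
  unfold w
  rw [Real.rpow_neg (by norm_num), Real.rpow_add two_pos, Real.rpow_one, Real.rpow_natCast,
    mul_inv]
  simp [one_div, inv_pow]

lemma summable_w : Summable w :=
  Summable.congr (((summable_geometric_of_lt_one (by norm_num) (by norm_num)).mul_left
    (1/2 : ℝ))) (fun i => (w_eq i).symm)

lemma tsum_w : ∑' i : ℕ, w i = 1 := by
  calc ∑' i : ℕ, w i = ∑' i : ℕ, (1/2) * (1/2:ℝ)^i := tsum_congr (fun i => w_eq i)
    _ = (1/2) * ∑' i : ℕ, (1/2:ℝ)^i := tsum_mul_left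
    _ = 1 := by rw [tsum_geometric_of_lt_one (by norm_num) (by norm_num)]; norm_num

lemma summable_iw : Summable (fun i : ℕ => (i:ℝ) * w i) := by
  have h := (summable_pow_mul_geometric_of_norm_lt_one (R := ℝ) 1
    (r := (1/2:ℝ)) (by rw [Real.norm_eq_abs, abs_of_pos (by norm_num : (0:ℝ) < 1/2)]; norm_num)).mul_left (1/2 : ℝ)
  exact h.congr (fun i => by rw [w_eq]; ring)

lemma tsum_iw : ∑' i : ℕ, (i:ℝ) * w i = 1 := by
  have hr : ‖(1/2 : ℝ)‖ < 1 := by rw [Real.norm_eq_abs, abs_of_pos (by norm_num : (0:ℝ) < 1/2)]; norm_num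
  calc ∑' i : ℕ, (i:ℝ) * w i = ∑' i : ℕ, (1/2) * ((i:ℝ) * (1/2:ℝ)^i) :=
        tsum_congr (fun i => by rw [w_eq]; ring)
    _ = (1/2) * ∑' i : ℕ, (i:ℝ) * (1/2:ℝ)^i := tsum_mul_left
    _ = 1 := by rw [tsum_coe_mul_geometric_of_norm_lt_one hr]; norm_num

lemma summable_linear (f : ℕ → ℝ) (a b : ℝ) (h : ∀ i : ℕ, |f i| ≤ (a + b*i) * w i) :
    Summable f := by
  have hs : Summable (fun i : ℕ => (a + b*(i:ℝ)) * w i) := by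
    have : Summable (fun i : ℕ => a * w i + b * ((i:ℝ) * w i)) :=
      (summable_w.mul_left a).add (summable_iw.mul_left b)
    exact this.congr (fun i => by ring)
  exact Summable.of_norm_bounded hs (by simpa [Real.norm_eq_abs] using h)

lemma zeta_pos (KD : Kernels) (p : ℤ → ℝ) (n : ℤ) : 0 < KD.zeta p n := by
  unfold Kernels.zeta
  exact div_pos (mul_pos (mul_pos log_two_pos (two_rpow_pos _))
    (KD.hkpos _ (two_rpow_pos _))) (KD.hγpos _ (two_rpow_pos _))

lemma theta_pos (KD : Kernels) (p : ℤ → ℝ) (n : ℤ) : 0 < KD.thetaSeq p n := by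
  unfold Kernels.thetaSeq
  exact div_pos (mul_pos two_pos (zeta_pos KD p _)) (zeta_pos KD p _)

lemma log_zeta (KD : Kernels) (p : ℤ → ℝ) (n : ℤ) :
    lz KD p n = Real.log (Real.log 2) - ((n:ℝ) + p n) * Real.log 2
      + Real.log (KD.k ((2:ℝ) ^ ((n:ℝ) + p n)))
      - Real.log (KD.γ ((2:ℝ) ^ ((n:ℝ) + 1 + p (n+1)))) := by
  unfold lz Kernels.zeta
  rw [Real.log_div
      (ne_of_gt (mul_pos (mul_pos log_two_pos (two_rpow_pos _)) (KD.hkpos _ (two_rpow_pos _))))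
      (ne_of_gt (KD.hγpos _ (two_rpow_pos _))),
    Real.log_mul (ne_of_gt (mul_pos log_two_pos (two_rpow_pos _)))
      (ne_of_gt (KD.hkpos _ (two_rpow_pos _))),
    Real.log_mul (ne_of_gt log_two_pos) (ne_of_gt (two_rpow_pos _)),
    Real.log_rpow two_pos]
  ring

lemma log_theta (KD : Kernels) (p : ℤ → ℝ) (n : ℤ) :
    Real.log (KD.thetaSeq p n) = Real.log 2 + lz KD p (n+1) - lz KD p n := by
  unfold Kernels.thetaSeq lz
  rw [Real.log_div (ne_of_gt (mul_pos two_pos (zeta_pos KD p _))) (ne_of_gt (zeta_pos KD p _)),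
    Real.log_mul two_ne_zero (ne_of_gt (zeta_pos KD p _))]

lemma abs_add6 (a b c d e f : ℝ) : |a+b+c+d+e+f| ≤ |a|+|b|+|c|+|d|+|e|+|f| := by
  have h1 := abs_add_le (a+b+c+d+e) f
  have h2 := abs_add_le (a+b+c+d) e
  have h3 := abs_add_le (a+b+c) d
  have h4 := abs_add_le (a+b) c
  have h5 := abs_add_le a b
  linarith

lemma abs_smul_le {c l a b : ℝ} (hc : 0 ≤ c) (hl : 0 ≤ l) (h : |a| ≤ b) :
    |c * a * l| ≤ c * b * l := by
  rw [abs_mul, abs_mul, abs_of_nonneg hc, abs_of_nonneg hl]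
  exact mul_le_mul_of_nonneg_right (mul_le_mul_of_nonneg_left h hc) hl

/-- affine comparison profile for `log ζ` -/
noncomputable def ell (KD : Kernels) (m : ℤ) : ℝ :=
  -(m:ℝ)*Real.log 2 + (KD.α+1)*(max 0 (m:ℝ))*Real.log 2 - KD.β*(max 0 ((m:ℝ)+1))*Real.log 2

/-- error constant for the comparison -/
noncomputable def DZ (KD : Kernels) (Mk Mg : ℝ) : ℝ :=
  |Real.log (Real.log 2)| + Real.log 2 + Mk + (KD.α+1)*Real.log 2 + Mg + KD.β*Real.log 2

section WithBounds

variable {KD : Kernels} {Mk Mg : ℝ} {p : ℤ → ℝ}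

lemma lz_near_ell
    (hMk : ∀ x : ℝ, |Real.log (KD.k ((2:ℝ)^x)) - (KD.α+1) * max 0 x * Real.log 2| ≤ Mk)
    (hMg : ∀ x : ℝ, |Real.log (KD.γ ((2:ℝ)^x)) - KD.β * max 0 x * Real.log 2| ≤ Mg)
    (hp : ∀ m, |p m| ≤ 1) (n : ℤ) :
    |lz KD p n - ell KD n| ≤ DZ KD Mk Mg := by
  have hα0 : (0:ℝ) ≤ KD.α + 1 := by linarith [KD.hα.1]
  have hβ0 : (0:ℝ) ≤ KD.β := by linarith [KD.hβ.1]
  set x := (n:ℝ) + p n with hxdef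
  set y := (n:ℝ) + 1 + p (n+1) with hydef
  have h3 : |max 0 x - max 0 (n:ℝ)| ≤ 1 := by
    have h := abs_max_sub_max_le_abs x (n:ℝ) 0
    rw [max_comm x 0, max_comm (n:ℝ) 0] at h
    have : x - (n:ℝ) = p n := by rw [hxdef]; ring
    rw [this] at h
    exact h.trans (hp n)
  have h4 : |max 0 y - max 0 ((n:ℝ)+1)| ≤ 1 := by
    have h := abs_max_sub_max_le_abs y ((n:ℝ)+1) 0
    rw [max_comm y 0, max_comm ((n:ℝ)+1) 0] at h
    have : y - ((n:ℝ)+1) = p (n+1) := by rw [hydef]; ring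
    rw [this] at h
    exact h.trans (hp (n+1))
  have hsum : lz KD p n - ell KD n =
      Real.log (Real.log 2)
      + (-(p n * Real.log 2))
      + (Real.log (KD.k ((2:ℝ)^x)) - (KD.α+1)*(max 0 x)*Real.log 2)
      + ((KD.α+1)*(max 0 x - max 0 (n:ℝ))*Real.log 2)
      + (-(Real.log (KD.γ ((2:ℝ)^y)) - KD.β*(max 0 y)*Real.log 2))
      + (-(KD.β*(max 0 y - max 0 ((n:ℝ)+1))*Real.log 2)) := by
    rw [log_zeta]; unfold ell; ring
  rw [hsum]
  apply (abs_add6 _ _ _ _ _ _).trans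
  have b1 : |(-(p n * Real.log 2))| ≤ Real.log 2 := by
    rw [abs_neg, abs_mul, abs_of_nonneg (le_of_lt log_two_pos)]
    nlinarith [hp n, log_two_pos, abs_nonneg (p n)]
  have b2 := hMk x
  have b3 : |(KD.α+1)*(max 0 x - max 0 (n:ℝ))*Real.log 2| ≤ (KD.α+1)*1*Real.log 2 :=
    abs_smul_le hα0 (le_of_lt log_two_pos) h3
  have b4 : |(-(Real.log (KD.γ ((2:ℝ)^y)) - KD.β*(max 0 y)*Real.log 2))| ≤ Mg := by
    rw [abs_neg]; exact hMg y
  have b5 : |(-(KD.β*(max 0 y - max 0 ((n:ℝ)+1))*Real.log 2))| ≤ KD.β*1*Real.log 2 := by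
    rw [abs_neg]; exact abs_smul_le hβ0 (le_of_lt log_two_pos) h4
  have e1 : (KD.α+1)*1*Real.log 2 = (KD.α+1)*Real.log 2 := by ring
  have e2 : KD.β*1*Real.log 2 = KD.β*Real.log 2 := by ring
  unfold DZ
  linarith [le_refl |Real.log (Real.log 2)|, b1, b2, b3, b4, b5]

/-- linear growth constant for `|log ζ|` -/
noncomputable def CZ (KD : Kernels) (Mk Mg : ℝ) : ℝ :=
  DZ KD Mk Mg + (2 + KD.α + KD.β) * Real.log 2

lemma bound_nonneg {g : ℝ → ℝ} {M : ℝ} (h : ∀ x : ℝ, |g x| ≤ M) : 0 ≤ M :=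
  le_trans (abs_nonneg (g 0)) (h 0)

lemma DZ_nonneg (hMk : 0 ≤ Mk) (hMg : 0 ≤ Mg) : 0 ≤ DZ KD Mk Mg := by
  unfold DZ
  have := log_two_pos
  have := abs_nonneg (Real.log (Real.log 2))
  have hα0 : (0:ℝ) ≤ KD.α + 1 := by linarith [KD.hα.1]
  have hβ0 : (0:ℝ) ≤ KD.β := by linarith [KD.hβ.1]
  nlinarith

lemma CZ_nonneg (hMk : 0 ≤ Mk) (hMg : 0 ≤ Mg) : 0 ≤ CZ KD Mk Mg := by
  have h := DZ_nonneg (KD := KD) hMk hMg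
  unfold CZ
  have := log_two_pos
  have hα0 : (0:ℝ) < KD.α := KD.hα.1
  have hβ0 : (0:ℝ) < KD.β := by linarith [KD.hβ.1]
  nlinarith

lemma ell_abs_le (n : ℤ) : |ell KD n| ≤ (2 + KD.α + KD.β) * Real.log 2 * (1 + |(n:ℝ)|) := by
  have hL := log_two_pos
  have hα0 : (0:ℝ) ≤ KD.α := le_of_lt KD.hα.1
  have hβ0 : (0:ℝ) ≤ KD.β := by linarith [KD.hβ.1]
  have hm1 : |max 0 (n:ℝ)| ≤ |(n:ℝ)| := by
    rw [abs_of_nonneg (le_max_left _ _)]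
    exact max_le (abs_nonneg _) (le_abs_self _)
  have hm2 : |max 0 ((n:ℝ)+1)| ≤ |(n:ℝ)| + 1 := by
    rw [abs_of_nonneg (le_max_left _ _)]
    refine max_le (by positivity) ?_
    have := le_abs_self (n:ℝ); linarith
  have t1 : |ell KD n| ≤ |(-(n:ℝ)*Real.log 2)| + |(KD.α+1)*(max 0 (n:ℝ))*Real.log 2|
      + |KD.β*(max 0 ((n:ℝ)+1))*Real.log 2| := by
    unfold ell
    calc |(-(n:ℝ)*Real.log 2 + (KD.α+1)*(max 0 (n:ℝ))*Real.log 2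
          - KD.β*(max 0 ((n:ℝ)+1))*Real.log 2)|
        = |((-(n:ℝ)*Real.log 2 + (KD.α+1)*(max 0 (n:ℝ))*Real.log 2)
          + (-(KD.β*(max 0 ((n:ℝ)+1))*Real.log 2)))| := by rw [sub_eq_add_neg]
      _ ≤ |(-(n:ℝ)*Real.log 2 + (KD.α+1)*(max 0 (n:ℝ))*Real.log 2)|
          + |(-(KD.β*(max 0 ((n:ℝ)+1))*Real.log 2))| := abs_add_le _ _
      _ ≤ _ := by
          rw [abs_neg]
          exact add_le_add (abs_add_le _ _) le_rfl
  have c1 : |(-(n:ℝ)*Real.log 2)| = |(n:ℝ)| * Real.log 2 := by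
    rw [abs_mul, abs_neg, abs_of_nonneg (le_of_lt hL)]
  have c2 : |(KD.α+1)*(max 0 (n:ℝ))*Real.log 2| ≤ (KD.α+1)*|(n:ℝ)| * Real.log 2 :=
    abs_smul_le (by linarith) (le_of_lt hL) hm1
  have c3 : |KD.β*(max 0 ((n:ℝ)+1))*Real.log 2| ≤ KD.β*(|(n:ℝ)|+1) * Real.log 2 :=
    abs_smul_le hβ0 (le_of_lt hL) hm2
  rw [c1] at t1
  nlinarith [abs_nonneg (n:ℝ)]

variable (hMk : ∀ x : ℝ, |Real.log (KD.k ((2:ℝ)^x)) - (KD.α+1) * max 0 x * Real.log 2| ≤ Mk)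
variable (hMg : ∀ x : ℝ, |Real.log (KD.γ ((2:ℝ)^x)) - KD.β * max 0 x * Real.log 2| ≤ Mg)
variable (hp : ∀ m, |p m| ≤ 1)

include hMk hMg hp in
lemma lz_linear (n : ℤ) : |lz KD p n| ≤ CZ KD Mk Mg * (1 + |(n:ℝ)|) := by
  have h1 := lz_near_ell hMk hMg hp n
  have h2 := ell_abs_le (KD := KD) n
  have h3 : |lz KD p n| ≤ DZ KD Mk Mg + |ell KD n| := by
    have := abs_sub_abs_le_abs_sub (lz KD p n) (ell KD n)
    linarith [abs_le.1 h1]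
  have hD := DZ_nonneg (KD := KD) (bound_nonneg hMk) (bound_nonneg hMg)
  have hn : (1:ℝ) ≤ 1 + |(n:ℝ)| := by linarith [abs_nonneg (n:ℝ)]
  unfold CZ
  nlinarith [h2, h3]

include hMk hMg hp in
lemma summable_wlz (n : ℤ) : Summable (fun i : ℕ => w i * lz KD p (n + (i:ℤ))) := by
  set C := CZ KD Mk Mg with hC
  have hC0 : 0 ≤ C := CZ_nonneg (bound_nonneg hMk) (bound_nonneg hMg)
  apply summable_linear _ (C*(1+|(n:ℝ)|)) C
  intro i
  rw [abs_mul, abs_of_pos (w_pos i), mul_comm (w i)]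
  apply mul_le_mul_of_nonneg_right _ (le_of_lt (w_pos i))
  have h := lz_linear hMk hMg hp (n + (i:ℤ))
  have hcast : |((n + (i:ℤ) : ℤ):ℝ)| ≤ |(n:ℝ)| + (i:ℝ) := by
    push_cast
    calc |(n:ℝ) + (i:ℝ)| ≤ |(n:ℝ)| + |(i:ℝ)| := abs_add_le _ _
      _ = |(n:ℝ)| + (i:ℝ) := by rw [Nat.abs_cast]
  calc |lz KD p (n + (i:ℤ))| ≤ C * (1 + |((n + (i:ℤ) : ℤ):ℝ)|) := h
    _ ≤ C * (1 + (|(n:ℝ)| + (i:ℝ))) := by nlinarith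
    _ = C*(1+|(n:ℝ)|) + C*(i:ℝ) := by ring

include hMk hMg hp in
lemma summable_wtheta (n : ℤ) :
    Summable (fun j : ℕ => w j * Real.log (KD.thetaSeq p (n + (j:ℤ)))) := by
  set C := CZ KD Mk Mg with hC
  have hC0 : 0 ≤ C := CZ_nonneg (bound_nonneg hMk) (bound_nonneg hMg)
  apply summable_linear _ (Real.log 2 + 2*C*(2+|(n:ℝ)|)) (2*C)
  intro j
  rw [abs_mul, abs_of_pos (w_pos j), mul_comm (w j)]
  apply mul_le_mul_of_nonneg_right _ (le_of_lt (w_pos j))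
  rw [log_theta]
  have h1 := lz_linear hMk hMg hp (n + (j:ℤ) + 1)
  have h2 := lz_linear hMk hMg hp (n + (j:ℤ))
  have hc1 : |((n + (j:ℤ) + 1 : ℤ):ℝ)| ≤ |(n:ℝ)| + (j:ℝ) + 1 := by
    push_cast
    rw [add_assoc]
    calc |(n:ℝ) + ((j:ℝ) + 1)| ≤ |(n:ℝ)| + |(j:ℝ) + 1| := abs_add_le _ _
      _ = |(n:ℝ)| + ((j:ℝ) + 1) := by
          rw [abs_of_nonneg (by positivity : (0:ℝ) ≤ (j:ℝ) + 1)]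
      _ = |(n:ℝ)| + (j:ℝ) + 1 := by ring
  have hc2 : |((n + (j:ℤ) : ℤ):ℝ)| ≤ |(n:ℝ)| + (j:ℝ) := by
    push_cast
    calc |(n:ℝ) + (j:ℝ)| ≤ |(n:ℝ)| + |(j:ℝ)| := abs_add_le _ _
      _ = |(n:ℝ)| + (j:ℝ) := by rw [Nat.abs_cast]
  have ht : |Real.log 2 + lz KD p (n + (j:ℤ) + 1) - lz KD p (n + (j:ℤ))| ≤
      Real.log 2 + |lz KD p (n + (j:ℤ) + 1)| + |lz KD p (n + (j:ℤ))| := by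
    have h0 := abs_add_le (Real.log 2 + lz KD p (n + (j:ℤ) + 1)) (-(lz KD p (n + (j:ℤ))))
    rw [abs_neg] at h0
    have h' := abs_add_le (Real.log 2) (lz KD p (n + (j:ℤ) + 1))
    have habs2 : |Real.log 2| = Real.log 2 := abs_of_pos log_two_pos
    rw [habs2] at h'
    have heq : Real.log 2 + lz KD p (n + (j:ℤ) + 1) - lz KD p (n + (j:ℤ)) =
        (Real.log 2 + lz KD p (n + (j:ℤ) + 1)) + (-(lz KD p (n + (j:ℤ)))) := by ring
    rw [heq]
    linarith
  calc |Real.log 2 + lz KD p (n + (j:ℤ) + 1) - lz KD p (n + (j:ℤ))|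
      ≤ Real.log 2 + |lz KD p (n + (j:ℤ) + 1)| + |lz KD p (n + (j:ℤ))| := ht
    _ ≤ Real.log 2 + C * (1 + (|(n:ℝ)| + (j:ℝ) + 1)) + C * (1 + (|(n:ℝ)| + (j:ℝ))) := by
        nlinarith [h1, h2, hc1, hc2]
    _ ≤ Real.log 2 + 2*C*(2+|(n:ℝ)|) + 2*C*(j:ℝ) := by nlinarith [abs_nonneg (n:ℝ), Nat.cast_nonneg (α := ℝ) j]

end WithBounds

end MbarAux


namespace MbarAux
open Real Filter Set

section Main
variable {KD : Kernels} {Mk Mg : ℝ} {p : ℤ → ℝ}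
variable (hMk : ∀ x : ℝ, |Real.log (KD.k ((2:ℝ)^x)) - (KD.α+1) * max 0 x * Real.log 2| ≤ Mk)
variable (hMg : ∀ x : ℝ, |Real.log (KD.γ ((2:ℝ)^x)) - KD.β * max 0 x * Real.log 2| ≤ Mg)
variable (hp : ∀ m, |p m| ≤ 1)

include hMk hMg hp in
lemma tp_shift (n : ℤ) : 2 * Tp KD p n = lz KD p n + Tp KD p (n+1) := by
  have hs := summable_wlz hMk hMg hp n
  have h0 := hs.tsum_eq_zero_add
  have hterm : ∀ j : ℕ, w (j+1) * lz KD p (n + ((j+1 : ℕ):ℤ)) =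
      (1/2) * (w j * lz KD p ((n+1) + (j:ℤ))) := by
    intro j
    have hw : w (j+1) = (1/2) * w j := by rw [w_eq, w_eq]; push_cast; ring
    have hidx : n + ((j+1 : ℕ):ℤ) = (n+1) + (j:ℤ) := by push_cast; ring
    rw [hw, hidx]; ring
  unfold Tp
  rw [h0, tsum_congr hterm, tsum_mul_left]
  simp only [Nat.cast_zero, add_zero]
  have hw0 : w 0 = 1/2 := by rw [w_eq]; norm_num
  rw [hw0]
  ring

include hMk hMg hp in
lemma mbar_eq (A : ℝ) (n : ℤ) :
    KD.mbar A p n = Real.exp (-A * (2:ℝ)^(n:ℝ)) * Real.exp (-(Tp KD p n)) := by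
  have hs1 := summable_wlz hMk hMg hp n
  have hs2 := summable_wlz hMk hMg hp (n+1)
  have hgeo : Summable (fun j : ℕ => w j * Real.log 2) := summable_w.mul_right _
  have hU : (2:ℝ)^((n:ℝ)) *
      (∑' j : ℕ, (2:ℝ)^(-((n:ℝ)+1+(j:ℝ))) * Real.log (KD.thetaSeq p (n + (j:ℤ))))
      = Real.log 2 + Tp KD p (n+1) - Tp KD p n := by
    rw [← tsum_mul_left]
    have hterm : ∀ j : ℕ,
        (2:ℝ)^((n:ℝ)) * ((2:ℝ)^(-((n:ℝ)+1+(j:ℝ))) * Real.log (KD.thetaSeq p (n + (j:ℤ))))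
        = w j * Real.log 2 + (w j * lz KD p ((n+1) + (j:ℤ)) - w j * lz KD p (n + (j:ℤ))) := by
      intro j
      have h2 : (2:ℝ)^((n:ℝ)) * (2:ℝ)^(-((n:ℝ)+1+(j:ℝ))) = w j := by
        rw [← Real.rpow_add two_pos]; unfold w; ring_nf
      have h3 := log_theta KD p (n + (j:ℤ))
      have hidx : n + (j:ℤ) + 1 = (n+1) + (j:ℤ) := by ring
      rw [hidx] at h3
      calc (2:ℝ)^((n:ℝ)) * ((2:ℝ)^(-((n:ℝ)+1+(j:ℝ))) * Real.log (KD.thetaSeq p (n + (j:ℤ))))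
          = ((2:ℝ)^((n:ℝ)) * (2:ℝ)^(-((n:ℝ)+1+(j:ℝ)))) * Real.log (KD.thetaSeq p (n + (j:ℤ))) := by
            ring
        _ = w j * (Real.log 2 + lz KD p ((n+1) + (j:ℤ)) - lz KD p (n + (j:ℤ))) := by rw [h2, h3]
        _ = _ := by ring
    rw [tsum_congr hterm, hgeo.tsum_add (hs2.sub hs1), hs2.tsum_sub hs1]
    have hlog2 : ∑' j : ℕ, w j * Real.log 2 = Real.log 2 := by
      rw [tsum_mul_right, tsum_w, one_mul]
    rw [hlog2]
    unfold Tp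
    ring
  have hshift := tp_shift hMk hMg hp n
  have hU2 : -((2:ℝ)^((n:ℝ))) *
      (∑' j : ℕ, (2:ℝ)^(-((n:ℝ)+1+(j:ℝ))) * Real.log (KD.thetaSeq p (n + (j:ℤ))))
      = -(Real.log 2) + -(Tp KD p n) + lz KD p n := by
    rw [neg_mul, hU]; linarith
  unfold Kernels.mbar Kernels.mubar
  rw [hU2, Real.exp_add, Real.exp_add]
  have he1 : Real.exp (-(Real.log 2)) = 1/2 := by
    rw [Real.exp_neg, Real.exp_log two_pos]; norm_num
  have he2 : Real.exp (lz KD p n) = KD.zeta p n := Real.exp_log (zeta_pos KD p n)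
  rw [he1, he2]
  have hζ : KD.zeta p n ≠ 0 := ne_of_gt (zeta_pos KD p n)
  field_simp

include hMk hMg hp in
lemma tp_ge (n : ℤ) (c0 c1 c2 : ℝ)
    (hpt : ∀ i : ℕ, c0 - c1*(i:ℝ) - c2 ≤ lz KD p (n + (i:ℤ))) :
    c0 - c1 - c2 ≤ Tp KD p n := by
  have hs := summable_wlz hMk hMg hp n
  have hf : Summable (fun i : ℕ => (c0 - c2) * w i - c1 * ((i:ℝ) * w i)) :=
    (summable_w.mul_left _).sub (summable_iw.mul_left _)
  have hle : ∀ i : ℕ, (c0 - c2) * w i - c1 * ((i:ℝ) * w i) ≤ w i * lz KD p (n + (i:ℤ)) := by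
    intro i
    calc (c0 - c2) * w i - c1 * ((i:ℝ) * w i) = w i * (c0 - c1*(i:ℝ) - c2) := by ring
      _ ≤ w i * lz KD p (n + (i:ℤ)) :=
          mul_le_mul_of_nonneg_left (hpt i) (le_of_lt (w_pos i))
  have hmain := Summable.tsum_le_tsum hle hf hs
  unfold Tp
  calc c0 - c1 - c2 = (c0 - c2) * (∑' i : ℕ, w i) - c1 * (∑' i : ℕ, (i:ℝ) * w i) := by
        rw [tsum_w, tsum_iw]; ring
    _ = ∑' i : ℕ, ((c0 - c2) * w i - c1 * ((i:ℝ) * w i)) := by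
        rw [(summable_w.mul_left _).tsum_sub (summable_iw.mul_left _),
          tsum_mul_left, tsum_mul_left]
    _ ≤ _ := hmain

include hMk hMg hp in
lemma tp_lower_pos (n : ℤ) (hn : 0 ≤ n) :
    (KD.α - KD.β)*(n:ℝ)*Real.log 2 - (KD.β - KD.α)*Real.log 2
      - (KD.β*Real.log 2 + DZ KD Mk Mg) ≤ Tp KD p n := by
  apply tp_ge hMk hMg hp
  intro i
  have h := (abs_le.1 (lz_near_ell hMk hMg hp (n + (i:ℤ)))).1
  have hm0 : (0:ℝ) ≤ ((n + (i:ℤ) : ℤ):ℝ) := by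
    have : (0:ℤ) ≤ n + (i:ℤ) := by positivity
    exact_mod_cast this
  have hell : ell KD (n + (i:ℤ)) =
      (KD.α - KD.β)*((n:ℝ)+(i:ℝ))*Real.log 2 - KD.β*Real.log 2 := by
    unfold ell
    rw [max_eq_right hm0, max_eq_right (by linarith : (0:ℝ) ≤ ((n + (i:ℤ) : ℤ):ℝ)+1)]
    push_cast
    ring
  have hfin : (KD.α - KD.β)*(n:ℝ)*Real.log 2 - ((KD.β - KD.α)*Real.log 2)*(i:ℝ)
      - (KD.β*Real.log 2 + DZ KD Mk Mg) = ell KD (n + (i:ℤ)) - DZ KD Mk Mg := by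
    rw [hell]; ring
  rw [hfin]
  linarith

include hMk hMg hp in
lemma tp_lower_neg (n : ℤ) (hn : n ≤ 0) :
    -(n:ℝ)*Real.log 2 - (1+KD.β)*Real.log 2
      - (KD.β*Real.log 2 + DZ KD Mk Mg) ≤ Tp KD p n := by
  have hL := log_two_pos
  have hβ0 : (0:ℝ) ≤ KD.β := by linarith [KD.hβ.1]
  have hα0 : (0:ℝ) ≤ KD.α + 1 := by linarith [KD.hα.1]
  apply tp_ge hMk hMg hp
  intro i
  have h := (abs_le.1 (lz_near_ell hMk hMg hp (n + (i:ℤ)))).1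
  have hncast : ((n:ℤ):ℝ) ≤ 0 := by exact_mod_cast hn
  have hcast : ((n + (i:ℤ) : ℤ):ℝ) = (n:ℝ) + (i:ℝ) := by push_cast; ring
  have hell : ell KD (n + (i:ℤ)) = -((n:ℝ)+(i:ℝ))*Real.log 2
      + (KD.α+1)*(max 0 ((n:ℝ)+(i:ℝ)))*Real.log 2
      - KD.β*(max 0 (((n:ℝ)+(i:ℝ))+1))*Real.log 2 := by
    unfold ell; rw [hcast]
  have h1 : 0 ≤ (KD.α+1)*(max 0 ((n:ℝ)+(i:ℝ)))*Real.log 2 := by positivity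
  have h2 : KD.β*(max 0 (((n:ℝ)+(i:ℝ))+1))*Real.log 2 ≤ KD.β*((i:ℝ)+1)*Real.log 2 := by
    apply mul_le_mul_of_nonneg_right _ (le_of_lt hL)
    apply mul_le_mul_of_nonneg_left _ hβ0
    exact max_le (by positivity) (by linarith)
  have hellge : -((n:ℝ)+(i:ℝ))*Real.log 2 - KD.β*((i:ℝ)+1)*Real.log 2 ≤ ell KD (n + (i:ℤ)) := by
    rw [hell]; linarith
  have hfin : -(n:ℝ)*Real.log 2 - ((1+KD.β)*Real.log 2)*(i:ℝ)
      - (KD.β*Real.log 2 + DZ KD Mk Mg)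
      = (-((n:ℝ)+(i:ℝ))*Real.log 2 - KD.β*((i:ℝ)+1)*Real.log 2) - DZ KD Mk Mg := by ring
  rw [hfin]
  linarith

end Main

end MbarAux


namespace MbarAux
open Real Filter Set

lemma zeta_update_eq (KD : Kernels) (p : ℤ → ℝ) (k : ℤ) (x : ℝ) (m : ℤ)
    (h1 : m ≠ k) (h2 : m + 1 ≠ k) :
    KD.zeta (Function.update p k x) m = KD.zeta p m := by
  unfold Kernels.zeta
  rw [Function.update_of_ne h1, Function.update_of_ne h2]

lemma two_rpow_hasDerivAt (a x : ℝ) :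
    HasDerivAt (fun x : ℝ => (2:ℝ)^(a+x)) ((2:ℝ)^(a+x) * Real.log 2) x := by
  have h0 : HasDerivAt (fun x : ℝ => a + x) 1 x := (hasDerivAt_id x).const_add a
  have h1 := (Real.hasStrictDerivAt_const_rpow two_pos (a+x)).hasDerivAt
  have h2 := h1.comp x h0
  simpa [Function.comp_def] using h2

lemma k_hasDerivAt (KD : Kernels) {ξ : ℝ} (hξ : 0 < ξ) : HasDerivAt KD.k (deriv KD.k ξ) ξ := by
  have h := (KD.hkC2.contDiffAt (isOpen_Ioi.mem_nhds hξ)).differentiableAt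
    (by norm_num : (2 : WithTop ℕ∞) ≠ 0)
  exact h.hasDerivAt

lemma γ_hasDerivAt (KD : Kernels) {ξ : ℝ} (hξ : 0 < ξ) : HasDerivAt KD.γ (deriv KD.γ ξ) ξ := by
  have h := (KD.hγC2.contDiffAt (isOpen_Ioi.mem_nhds hξ)).differentiableAt
    (by norm_num : (2 : WithTop ℕ∞) ≠ 0)
  exact h.hasDerivAt

lemma hasDerivAt_logzeta_self (KD : Kernels) (p : ℤ → ℝ) (k : ℤ) :
    HasDerivAt (fun x => Real.log (KD.zeta (Function.update p k x) k))
      (Real.log 2 * ((2:ℝ)^((k:ℝ) + p k) * deriv KD.k ((2:ℝ)^((k:ℝ) + p k))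
        / KD.k ((2:ℝ)^((k:ℝ) + p k)) - 1)) (p k) := by
  have hne : (k+1 : ℤ) ≠ k := by omega
  have hfun : (fun x => Real.log (KD.zeta (Function.update p k x) k)) =
      fun x => Real.log (Real.log 2) + (-((k:ℝ) + x)) * Real.log 2
        + Real.log (KD.k ((2:ℝ)^((k:ℝ) + x)))
        - Real.log (KD.γ ((2:ℝ)^((k:ℝ) + 1 + p (k+1)))) := by
    funext x
    have hzz : KD.zeta (Function.update p k x) k =
        Real.log 2 * (2:ℝ)^(-((k:ℝ)+x)) * KD.k ((2:ℝ)^((k:ℝ)+x))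
          / KD.γ ((2:ℝ)^((k:ℝ)+1+p (k+1))) := by
      unfold Kernels.zeta
      rw [Function.update_self, Function.update_of_ne hne]
    rw [hzz, Real.log_div
        (ne_of_gt (mul_pos (mul_pos log_two_pos (two_rpow_pos _)) (KD.hkpos _ (two_rpow_pos _))))
        (ne_of_gt (KD.hγpos _ (two_rpow_pos _))),
      Real.log_mul (ne_of_gt (mul_pos log_two_pos (two_rpow_pos _)))
        (ne_of_gt (KD.hkpos _ (two_rpow_pos _))),
      Real.log_mul (ne_of_gt log_two_pos) (ne_of_gt (two_rpow_pos _)),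
      Real.log_rpow two_pos]
    try ring
  rw [hfun]
  have hξpos : (0:ℝ) < (2:ℝ)^((k:ℝ) + p k) := two_rpow_pos _
  have hkpos := KD.hkpos _ hξpos
  have h1 : HasDerivAt (fun x : ℝ => (-((k:ℝ) + x)) * Real.log 2) (-Real.log 2) (p k) := by
    have := (((hasDerivAt_id (p k)).const_add (k:ℝ)).neg).mul_const (Real.log 2)
    simpa using this
  have h2 := two_rpow_hasDerivAt (k:ℝ) (p k)
  have h3 := (k_hasDerivAt KD hξpos).comp (p k) h2
  have h4 := h3.log (ne_of_gt hkpos)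
  have h5 := (((hasDerivAt_const (p k) (Real.log (Real.log 2))).add h1).add h4).sub_const
    (Real.log (KD.γ ((2:ℝ)^((k:ℝ) + 1 + p (k+1)))))
  refine h5.congr_deriv ?_
  simp only [Function.comp_apply]
  try field_simp
  try ring

lemma hasDerivAt_logzeta_pred (KD : Kernels) (p : ℤ → ℝ) (k : ℤ) :
    HasDerivAt (fun x => Real.log (KD.zeta (Function.update p k x) (k-1)))
      (-(Real.log 2 * ((2:ℝ)^((k:ℝ) + p k) * deriv KD.γ ((2:ℝ)^((k:ℝ) + p k))
        / KD.γ ((2:ℝ)^((k:ℝ) + p k))))) (p k) := by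
  have hne : (k-1 : ℤ) ≠ k := by omega
  have hidx : (k-1) + 1 = k := by ring
  have hcast : ∀ x : ℝ, ((k-1 : ℤ):ℝ) + 1 + x = (k:ℝ) + x := by
    intro x; push_cast; ring
  have hfun : (fun x => Real.log (KD.zeta (Function.update p k x) (k-1))) =
      fun x => Real.log (Real.log 2) + (-(((k-1:ℤ):ℝ) + p (k-1))) * Real.log 2
        + Real.log (KD.k ((2:ℝ)^(((k-1:ℤ):ℝ) + p (k-1))))
        - Real.log (KD.γ ((2:ℝ)^((k:ℝ) + x))) := by
    funext x
    have hzz : KD.zeta (Function.update p k x) (k-1) =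
        Real.log 2 * (2:ℝ)^(-(((k-1:ℤ):ℝ) + p (k-1))) * KD.k ((2:ℝ)^(((k-1:ℤ):ℝ) + p (k-1)))
          / KD.γ ((2:ℝ)^((k:ℝ) + x)) := by
      unfold Kernels.zeta
      rw [Function.update_of_ne hne, hidx, Function.update_self, hcast]
    rw [hzz, Real.log_div
        (ne_of_gt (mul_pos (mul_pos log_two_pos (two_rpow_pos _)) (KD.hkpos _ (two_rpow_pos _))))
        (ne_of_gt (KD.hγpos _ (two_rpow_pos _))),
      Real.log_mul (ne_of_gt (mul_pos log_two_pos (two_rpow_pos _)))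
        (ne_of_gt (KD.hkpos _ (two_rpow_pos _))),
      Real.log_mul (ne_of_gt log_two_pos) (ne_of_gt (two_rpow_pos _)),
      Real.log_rpow two_pos]
    try ring
  rw [hfun]
  have hξpos : (0:ℝ) < (2:ℝ)^((k:ℝ) + p k) := two_rpow_pos _
  have hγpos := KD.hγpos _ hξpos
  have h2 := two_rpow_hasDerivAt (k:ℝ) (p k)
  have h3 := (γ_hasDerivAt KD hξpos).comp (p k) h2
  have h4 := h3.log (ne_of_gt hγpos)
  have h5 := ((hasDerivAt_const (p k) (Real.log (Real.log 2)
      + (-(((k-1:ℤ):ℝ) + p (k-1))) * Real.log 2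
      + Real.log (KD.k ((2:ℝ)^(((k-1:ℤ):ℝ) + p (k-1)))))).sub h4)
  refine h5.congr_deriv ?_
  simp only [Function.comp_apply]
  rw [zero_sub]
  ring

end MbarAux


open MbarAux

set_option maxHeartbeats 2000000

/-- the coefficients `m̄_n(A,p)` are well defined, positive, bounded,
solve the recurrence `m̄_{n+1} = ζ_n(p) m̄_n²`, have the two-sided asymptotics,
and satisfy the derivative estimates (Lemma 2.4). -/
theorem mbar_properties (KD : Kernels) :
    ∃ c : ℝ, 0 < c ∧
      ∀ A : ℝ, 0 < A → ∀ δ₀ : ℝ, 0 < δ₀ → δ₀ < 1 →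
      ∀ p : ℤ → ℝ, (∀ n, |p n| ≤ δ₀) →
        (∀ n : ℤ, Summable (fun j : ℕ =>
          (2:ℝ) ^ (-((n:ℝ) + 1 + (j:ℝ))) * Real.log (KD.thetaSeq p (n + (j:ℤ))))) ∧
        (∀ n : ℤ, 0 < KD.mbar A p n) ∧
        (∃ B : ℝ, ∀ n : ℤ, KD.mbar A p n ≤ B) ∧
        (∀ n : ℤ, KD.mbar A p (n + 1) = KD.zeta p n * KD.mbar A p n ^ 2) ∧
        ((fun n : ℤ => KD.mbar A p n) =O[atBot] fun n : ℤ => (2:ℝ) ^ (n:ℝ)) ∧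
        ((fun n : ℤ => KD.mbar A p n) =O[atTop]
          fun n : ℤ => (2:ℝ) ^ ((KD.β - KD.α) * (n:ℝ)) * Real.exp (-A * (2:ℝ) ^ (n:ℝ))) ∧
        (∀ n : ℤ, HasDerivAt (fun A' => KD.mbar A' p n)
          (-((2:ℝ) ^ (n:ℝ)) * KD.mbar A p n) A) ∧
        (∀ n k : ℤ, k < n →
          HasDerivAt (fun x => KD.mbar A (Function.update p k x) n) 0 (p k)) ∧
        (∀ n k : ℤ, n ≤ k → ∃ d : ℝ,
          HasDerivAt (fun x => KD.mbar A (Function.update p k x) n) d (p k) ∧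
            |d| ≤ c * (2:ℝ) ^ ((n:ℝ) - (k:ℝ)) * KD.mbar A p n) := by
  classical
  obtain ⟨ck, Ck, hck, hkb⟩ := k_sandwich KD
  obtain ⟨cg, Cg, hcg, hgb⟩ := γ_sandwich KD
  have hα1 : (0:ℝ) < KD.α + 1 := by linarith [KD.hα.1]
  have hβpos : (0:ℝ) < KD.β := by linarith [KD.hβ.1]
  have hαbpos : (0:ℝ) < KD.αb := by linarith [KD.hαb]
  have hβbpos : (0:ℝ) < KD.βb := by linarith [KD.hβb]
  have hL := log_two_pos
  set Mk := max |Real.log ck| |Real.log Ck| with hMkdef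
  set Mg := max |Real.log cg| |Real.log Cg| with hMgdef
  have hMk : ∀ x : ℝ, |Real.log (KD.k ((2:ℝ)^x)) - (KD.α+1) * max 0 x * Real.log 2| ≤ Mk :=
    log_sandwich hα1 hck KD.hkpos hkb
  have hMg : ∀ x : ℝ, |Real.log (KD.γ ((2:ℝ)^x)) - KD.β * max 0 x * Real.log 2| ≤ Mg :=
    log_sandwich hβpos hcg KD.hγpos hgb
  set CK := (KD.k₁ + 1) / ck with hCKdef
  set CG := (KD.γ₁ + 1) / cg with hCGdef
  have hCKpos : 0 < CK := by
    rw [hCKdef]; exact div_pos (by linarith [KD.hk₁]) hck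
  have hCGpos : 0 < CG := by
    rw [hCGdef]; exact div_pos (by linarith [KD.hγ₁]) hcg
  have hCK : ∀ ξ : ℝ, 0 < ξ → |ξ * deriv KD.k ξ| ≤ CK * KD.k ξ := by
    apply logderiv_bound_of_sandwich hα1 hαbpos (le_of_lt KD.hk₁) hck KD.hkpos
      (fun ξ hξ => (hkb ξ hξ).1)
    · intro ξ h1
      rw [show KD.α + 1 - 1 = KD.α by ring]
      exact KD.hk'ge ξ h1
    · exact KD.hk'le
  have hCG : ∀ ξ : ℝ, 0 < ξ → |ξ * deriv KD.γ ξ| ≤ CG * KD.γ ξ := by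
    apply logderiv_bound_of_sandwich hβpos hβbpos (le_of_lt KD.hγ₁) hcg KD.hγpos
      (fun ξ hξ => (hgb ξ hξ).1)
    · exact KD.hγ'ge
    · exact KD.hγ'le
  set Cρ := Real.log 2 * (CK + CG + 1) with hCρdef
  have hCρpos : 0 < Cρ := by rw [hCρdef]; positivity
  refine ⟨2 * Cρ, by positivity, ?_⟩
  intro A hA δ₀ hδ₀ hδ₁ p hp
  have hp1 : ∀ m, |p m| ≤ 1 := fun m => (hp m).trans (le_of_lt hδ₁)
  set D := DZ KD Mk Mg with hDdef
  -- (1) summability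
  have hsum : ∀ n : ℤ, Summable (fun j : ℕ =>
      (2:ℝ) ^ (-((n:ℝ) + 1 + (j:ℝ))) * Real.log (KD.thetaSeq p (n + (j:ℤ)))) := by
    intro n
    have h := (summable_wtheta hMk hMg hp1 n).mul_left ((2:ℝ)^(-(n:ℝ)))
    refine h.congr (fun j => ?_)
    rw [← mul_assoc]
    congr 1
    unfold w
    rw [← Real.rpow_add two_pos]
    congr 1
    ring
  -- (2) positivity
  have hpos : ∀ n : ℤ, 0 < KD.mbar A p n := by
    intro n
    rw [mbar_eq hMk hMg hp1 A n]
    positivity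
  -- upper bounds
  have hboundneg : ∀ n : ℤ, n ≤ 0 →
      KD.mbar A p n ≤ Real.exp ((1 + 2*KD.β)*Real.log 2 + D) * (2:ℝ)^(n:ℝ) := by
    intro n hn
    rw [mbar_eq hMk hMg hp1 A n]
    have ht := tp_lower_neg hMk hMg hp1 n hn
    have h1 : Real.exp (-A * (2:ℝ)^(n:ℝ)) ≤ 1 := by
      rw [← Real.exp_zero]
      exact Real.exp_le_exp.mpr (by nlinarith [two_rpow_pos (n:ℝ)])
    have h2n : (2:ℝ)^(n:ℝ) = Real.exp ((n:ℝ) * Real.log 2) := by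
      rw [Real.rpow_def_of_pos two_pos, mul_comm]
    calc Real.exp (-A * (2:ℝ)^(n:ℝ)) * Real.exp (-(Tp KD p n))
        ≤ 1 * Real.exp (-(Tp KD p n)) :=
          mul_le_mul_of_nonneg_right h1 (Real.exp_pos _).le
      _ = Real.exp (-(Tp KD p n)) := one_mul _
      _ ≤ Real.exp ((1 + 2*KD.β)*Real.log 2 + D + (n:ℝ)*Real.log 2) := by
          apply Real.exp_le_exp.mpr
          rw [hDdef]
          nlinarith [ht]
      _ = Real.exp ((1 + 2*KD.β)*Real.log 2 + D) * (2:ℝ)^(n:ℝ) := by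
          rw [Real.exp_add, h2n]
  have hboundpos : ∀ n : ℤ, 0 ≤ n →
      KD.mbar A p n ≤ Real.exp ((2*KD.β - KD.α)*Real.log 2 + D) *
        ((2:ℝ)^((KD.β - KD.α)*(n:ℝ)) * Real.exp (-A * (2:ℝ)^(n:ℝ))) := by
    intro n hn
    rw [mbar_eq hMk hMg hp1 A n]
    have ht := tp_lower_pos hMk hMg hp1 n hn
    have h2n : (2:ℝ)^((KD.β - KD.α)*(n:ℝ)) =
        Real.exp ((KD.β - KD.α)*(n:ℝ)*Real.log 2) := by
      rw [Real.rpow_def_of_pos two_pos]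
      ring_nf
    have h2 : Real.exp (-(Tp KD p n)) ≤
        Real.exp ((KD.β - KD.α)*(n:ℝ)*Real.log 2 + ((2*KD.β - KD.α)*Real.log 2 + D)) := by
      apply Real.exp_le_exp.mpr
      rw [hDdef]
      nlinarith [ht]
    calc Real.exp (-A * (2:ℝ)^(n:ℝ)) * Real.exp (-(Tp KD p n))
        = Real.exp (-(Tp KD p n)) * Real.exp (-A * (2:ℝ)^(n:ℝ)) := mul_comm _ _
      _ ≤ Real.exp ((KD.β - KD.α)*(n:ℝ)*Real.log 2 + ((2*KD.β - KD.α)*Real.log 2 + D))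
            * Real.exp (-A * (2:ℝ)^(n:ℝ)) :=
          mul_le_mul_of_nonneg_right h2 (Real.exp_pos _).le
      _ = _ := by rw [Real.exp_add, h2n]; ring
  -- (3) boundedness
  have hbdd : ∃ B : ℝ, ∀ n : ℤ, KD.mbar A p n ≤ B := by
    refine ⟨max (Real.exp ((1 + 2*KD.β)*Real.log 2 + D))
      (Real.exp ((2*KD.β - KD.α)*Real.log 2 + D) * (4 / A^2)), ?_⟩
    intro n
    rcases le_or_gt n 0 with hn | hn
    · refine le_trans (hboundneg n hn) (le_trans ?_ (le_max_left _ _))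
      have h2 : (2:ℝ)^(n:ℝ) ≤ 1 := by
        apply Real.rpow_le_one_of_one_le_of_nonpos one_le_two
        exact_mod_cast hn
      nlinarith [Real.exp_pos ((1 + 2*KD.β)*Real.log 2 + D)]
    · have hn' : (0:ℤ) ≤ n := le_of_lt hn
      refine le_trans (hboundpos n hn') (le_trans ?_ (le_max_right _ _))
      apply mul_le_mul_of_nonneg_left _ (Real.exp_pos _).le
      set t := (2:ℝ)^(n:ℝ) with htdef
      have htpos : 0 < t := two_rpow_pos _
      have hncast : (0:ℝ) ≤ (n:ℝ) := by exact_mod_cast hn'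
      have h1 : (2:ℝ)^((KD.β - KD.α)*(n:ℝ)) ≤ t * t := by
        have hle : (KD.β - KD.α)*(n:ℝ) ≤ (n:ℝ) + (n:ℝ) := by
          nlinarith [KD.hβ.2, KD.hα.1]
        calc (2:ℝ)^((KD.β - KD.α)*(n:ℝ)) ≤ (2:ℝ)^((n:ℝ) + (n:ℝ)) :=
              Real.rpow_le_rpow_of_exponent_le one_le_two hle
          _ = t * t := by rw [Real.rpow_add two_pos]
      have h4 : t * t * Real.exp (-(A * t)) ≤ 4 / A^2 := by
        have ha := Real.add_one_le_exp (A*t/2)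
        have hsq : Real.exp (A*t/2) * Real.exp (A*t/2) = Real.exp (A*t) := by
          rw [← Real.exp_add]; ring_nf
        have hApos : 0 < A * t := mul_pos hA htpos
        have hE : A*t/2 ≤ Real.exp (A*t/2) := by linarith
        have hsq2 : (A*t/2) * (A*t/2) ≤ Real.exp (A*t/2) * Real.exp (A*t/2) :=
          mul_le_mul hE hE (by linarith) (Real.exp_pos _).le
        have h5 : A^2 * t^2 / 4 ≤ Real.exp (A*t) := by nlinarith [hsq2, hsq]
        have h6 : (0:ℝ) < Real.exp (A*t) := Real.exp_pos _
        have h7 : t * t ≤ 4 / A^2 * Real.exp (A*t) := by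
          rw [div_mul_eq_mul_div, le_div_iff₀ (by positivity : (0:ℝ) < A^2)]
          nlinarith [h5]
        calc t * t * Real.exp (-(A*t)) = t * t * (Real.exp (A*t))⁻¹ := by rw [Real.exp_neg]
          _ ≤ (4 / A^2 * Real.exp (A*t)) * (Real.exp (A*t))⁻¹ :=
              mul_le_mul_of_nonneg_right h7 (inv_pos.2 h6).le
          _ = 4 / A^2 := by field_simp
      calc (2:ℝ)^((KD.β - KD.α)*(n:ℝ)) * Real.exp (-A * t)
          ≤ (t * t) * Real.exp (-A * t) :=
            mul_le_mul_of_nonneg_right h1 (Real.exp_pos _).le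
        _ = t * t * Real.exp (-(A * t)) := by ring_nf
        _ ≤ 4 / A^2 := h4
  -- (4) recurrence
  have hrec : ∀ n : ℤ, KD.mbar A p (n + 1) = KD.zeta p n * KD.mbar A p n ^ 2 := by
    intro n
    rw [mbar_eq hMk hMg hp1 A (n+1), mbar_eq hMk hMg hp1 A n]
    have hsh := tp_shift hMk hMg hp1 n
    have hζ : Real.exp (lz KD p n) = KD.zeta p n := Real.exp_log (zeta_pos KD p n)
    rw [← hζ]
    have hc : (((n+1:ℤ)):ℝ) = (n:ℝ) + 1 := by push_cast; ring
    rw [pow_two, ← Real.exp_add, ← Real.exp_add, ← Real.exp_add, ← Real.exp_add,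
      Real.exp_eq_exp]
    rw [hc, Real.rpow_add two_pos, Real.rpow_one]
    have e1 : -A * ((2:ℝ)^((n:ℝ)) * 2) = 2 * (-A * (2:ℝ)^((n:ℝ))) := by ring
    linarith [hsh, e1]
  -- (5) atBot
  have hatBot : (fun n : ℤ => KD.mbar A p n) =O[atBot] fun n : ℤ => (2:ℝ)^(n:ℝ) := by
    rw [Asymptotics.isBigO_iff]
    refine ⟨Real.exp ((1 + 2*KD.β)*Real.log 2 + D), ?_⟩
    filter_upwards [Filter.eventually_le_atBot (0:ℤ)] with n hn
    rw [Real.norm_eq_abs, Real.norm_eq_abs, abs_of_pos (hpos n), abs_of_pos (two_rpow_pos _)]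
    exact hboundneg n hn
  -- (6) atTop
  have hatTop : (fun n : ℤ => KD.mbar A p n) =O[atTop]
      fun n : ℤ => (2:ℝ)^((KD.β - KD.α)*(n:ℝ)) * Real.exp (-A * (2:ℝ)^(n:ℝ)) := by
    rw [Asymptotics.isBigO_iff]
    refine ⟨Real.exp ((2*KD.β - KD.α)*Real.log 2 + D), ?_⟩
    filter_upwards [Filter.eventually_ge_atTop (0:ℤ)] with n hn
    rw [Real.norm_eq_abs, Real.norm_eq_abs, abs_of_pos (hpos n),
      abs_of_pos (mul_pos (two_rpow_pos _) (Real.exp_pos _))]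
    exact hboundpos n hn
  -- (7) A-derivative
  have hAder : ∀ n : ℤ, HasDerivAt (fun A' => KD.mbar A' p n)
      (-((2:ℝ)^(n:ℝ)) * KD.mbar A p n) A := by
    intro n
    have hfun : (fun A' => KD.mbar A' p n) =
        fun A' => Real.exp (-A' * (2:ℝ)^(n:ℝ)) * Real.exp (-(Tp KD p n)) :=
      funext (fun A' => mbar_eq hMk hMg hp1 A' n)
    rw [hfun]
    have h1 : HasDerivAt (fun A' : ℝ => -A' * (2:ℝ)^(n:ℝ)) (-(2:ℝ)^(n:ℝ)) A := by
      simpa using ((hasDerivAt_id A).neg.mul_const ((2:ℝ)^(n:ℝ)))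
    have h2 := h1.exp.mul_const (Real.exp (-(Tp KD p n)))
    refine h2.congr_deriv ?_
    rw [mbar_eq hMk hMg hp1 A n]
    ring
  -- (8) derivative in p_k for k < n
  have hpder0 : ∀ n k : ℤ, k < n →
      HasDerivAt (fun x => KD.mbar A (Function.update p k x) n) 0 (p k) := by
    intro n k hkn
    have heq : (fun x => KD.mbar A (Function.update p k x) n) = fun _ => KD.mbar A p n := by
      funext x
      have hz : ∀ m : ℤ, n ≤ m → KD.zeta (Function.update p k x) m = KD.zeta p m := by
        intro m hm
        exact zeta_update_eq KD p k x m (by omega) (by omega)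
      have ht : ∀ j : ℕ, KD.thetaSeq (Function.update p k x) (n + (j:ℤ)) =
          KD.thetaSeq p (n + (j:ℤ)) := by
        intro j
        unfold Kernels.thetaSeq
        rw [hz _ (by omega), hz _ (by omega)]
      have htsum : (∑' j:ℕ, (2:ℝ)^(-((n:ℝ)+1+(j:ℝ))) *
          Real.log (KD.thetaSeq (Function.update p k x) (n + (j:ℤ)))) =
          ∑' j:ℕ, (2:ℝ)^(-((n:ℝ)+1+(j:ℝ))) * Real.log (KD.thetaSeq p (n + (j:ℤ))) :=
        tsum_congr (fun j => by rw [ht j])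
      unfold Kernels.mbar Kernels.mubar
      rw [htsum, hz n le_rfl]
    rw [heq]
    exact hasDerivAt_const _ _
  -- (9) derivative in p_k for n ≤ k
  have hpder1 : ∀ n k : ℤ, n ≤ k → ∃ d : ℝ,
      HasDerivAt (fun x => KD.mbar A (Function.update p k x) n) d (p k) ∧
        |d| ≤ 2 * Cρ * (2:ℝ)^((n:ℝ) - (k:ℝ)) * KD.mbar A p n := by
    intro n k hnk
    have hξpos : (0:ℝ) < (2:ℝ)^((k:ℝ) + p k) := two_rpow_pos _
    have hkxpos := KD.hkpos _ hξpos
    have hgxpos := KD.hγpos _ hξpos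
    set ρk : ℝ := Real.log 2 * ((2:ℝ)^((k:ℝ) + p k) * deriv KD.k ((2:ℝ)^((k:ℝ) + p k))
      / KD.k ((2:ℝ)^((k:ℝ) + p k)) - 1) with hρkdef
    set ρg : ℝ := -(Real.log 2 * ((2:ℝ)^((k:ℝ) + p k) * deriv KD.γ ((2:ℝ)^((k:ℝ) + p k))
      / KD.γ ((2:ℝ)^((k:ℝ) + p k)))) with hρgdef
    set ρ : ℤ → ℝ := fun m => if m = k then ρk else if m = k-1 then ρg else 0 with hρdef
    have hρbound : ∀ m : ℤ, |ρ m| ≤ Cρ := by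
      intro m
      have hbk : |(2:ℝ)^((k:ℝ) + p k) * deriv KD.k ((2:ℝ)^((k:ℝ) + p k))
          / KD.k ((2:ℝ)^((k:ℝ) + p k))| ≤ CK := by
        rw [abs_div, abs_of_pos hkxpos, div_le_iff₀ hkxpos]
        exact hCK _ hξpos
      have hbg : |(2:ℝ)^((k:ℝ) + p k) * deriv KD.γ ((2:ℝ)^((k:ℝ) + p k))
          / KD.γ ((2:ℝ)^((k:ℝ) + p k))| ≤ CG := by
        rw [abs_div, abs_of_pos hgxpos, div_le_iff₀ hgxpos]
        exact hCG _ hξpos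
      simp only [hρdef]
      by_cases h1 : m = k
      · rw [if_pos h1, hρkdef, abs_mul, abs_of_pos hL]
        have h2 : |(2:ℝ)^((k:ℝ) + p k) * deriv KD.k ((2:ℝ)^((k:ℝ) + p k))
            / KD.k ((2:ℝ)^((k:ℝ) + p k)) - 1| ≤ CK + 1 := by
          have h3 := abs_add_le ((2:ℝ)^((k:ℝ) + p k) * deriv KD.k ((2:ℝ)^((k:ℝ) + p k))
            / KD.k ((2:ℝ)^((k:ℝ) + p k))) (-1)
          rw [abs_neg, abs_one] at h3
          have h4 : (2:ℝ)^((k:ℝ) + p k) * deriv KD.k ((2:ℝ)^((k:ℝ) + p k))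
            / KD.k ((2:ℝ)^((k:ℝ) + p k)) + (-1) = (2:ℝ)^((k:ℝ) + p k)
            * deriv KD.k ((2:ℝ)^((k:ℝ) + p k)) / KD.k ((2:ℝ)^((k:ℝ) + p k)) - 1 := by ring
          rw [h4] at h3
          linarith [hbk]
        rw [hCρdef]
        nlinarith [hCGpos, hL]
      · rw [if_neg h1]
        by_cases h2 : m = k-1
        · rw [if_pos h2, hρgdef, abs_neg, abs_mul, abs_of_pos hL, hCρdef]
          nlinarith [hbg, hCKpos, hL, abs_nonneg ((2:ℝ)^((k:ℝ) + p k)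
            * deriv KD.γ ((2:ℝ)^((k:ℝ) + p k)) / KD.γ ((2:ℝ)^((k:ℝ) + p k)))]
        · rw [if_neg h2, abs_zero]
          exact le_of_lt hCρpos
    have hzder : ∀ m : ℤ, HasDerivAt
        (fun x => lz KD (Function.update p k x) m) (ρ m) (p k) := by
      intro m
      by_cases h1 : m = k
      · rw [h1]
        have hveq : ρ k = ρk := by simp [hρdef]
        rw [hveq, hρkdef]
        exact hasDerivAt_logzeta_self KD p k
      · by_cases h2 : m = k-1
        · rw [h2]
          have hveq : ρ (k-1) = ρg := by
            have hne : (k-1:ℤ) ≠ k := by omega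
            simp [hρdef, hne]
          rw [hveq, hρgdef]
          exact hasDerivAt_logzeta_pred KD p k
        · have hconst : (fun x => lz KD (Function.update p k x) m) =
              fun _ => lz KD p m := by
            funext x
            unfold lz
            rw [zeta_update_eq KD p k x m h1 (by omega)]
          have hveq : ρ m = 0 := by simp [hρdef, h1, h2]
          rw [hveq, hconst]
          exact hasDerivAt_const _ _
    set t : Finset ℕ := {(k-1-n).toNat, (k-n).toNat} with htdef
    have hmemc : ∀ i : ℕ, i ∉ t → ((n + (i:ℤ)) ≠ k ∧ (n + (i:ℤ)) + 1 ≠ k) := by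
      intro i hi
      rw [htdef, Finset.mem_insert, Finset.mem_singleton] at hi
      push_neg at hi
      omega
    set Rc : ℝ := ∑' (y : ↑((↑t : Set ℕ)ᶜ)), w (y:ℕ) * lz KD p (n + ((y:ℕ):ℤ)) with hRcdef
    have hval : ∀ x : ℝ, |x| ≤ 1 → KD.mbar A (Function.update p k x) n =
        Real.exp (-A * (2:ℝ)^((n:ℝ))) *
          Real.exp (-((∑ i ∈ t, w i * lz KD (Function.update p k x) (n+(i:ℤ))) + Rc)) := by
      intro x hx
      have hq : ∀ m, |Function.update p k x m| ≤ 1 := by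
        intro m
        by_cases h : m = k
        · rw [h, Function.update_self]; exact hx
        · rw [Function.update_of_ne h]; exact hp1 m
      rw [mbar_eq hMk hMg hq A n]
      have hsplit := Summable.sum_add_tsum_compl (s := t)
        (summable_wlz hMk hMg hq n)
      have hcompl : (∑' (y : ↑((↑t : Set ℕ)ᶜ)),
          w (y:ℕ) * lz KD (Function.update p k x) (n + ((y:ℕ):ℤ))) = Rc := by
        apply tsum_congr
        intro y
        have hy' : (y : ℕ) ∉ t := by
          have hyy := y.2
          simp only [Set.mem_compl_iff, Finset.mem_coe] at hyy
          exact hyy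
        have hy := hmemc y.1 hy'
        unfold lz
        rw [zeta_update_eq KD p k x _ hy.1 hy.2]
      have hTp : Tp KD (Function.update p k x) n =
          (∑ i ∈ t, w i * lz KD (Function.update p k x) (n+(i:ℤ))) + Rc := by
        calc Tp KD (Function.update p k x) n
            = (∑ i ∈ t, w i * lz KD (Function.update p k x) (n+(i:ℤ))) +
              ∑' (y : ↑((↑t : Set ℕ)ᶜ)),
                w (y:ℕ) * lz KD (Function.update p k x) (n + ((y:ℕ):ℤ)) := hsplit.symm
          _ = _ := by rw [hcompl]
      rw [hTp]
    have hSder : HasDerivAt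
        (fun x => ∑ i ∈ t, w i * lz KD (Function.update p k x) (n+(i:ℤ)))
        (∑ i ∈ t, w i * ρ (n+(i:ℤ))) (p k) :=
      HasDerivAt.fun_sum (fun (i : ℕ) _ => (hzder (n+(i:ℤ))).const_mul (w i))
    have hGder := ((hSder.add_const Rc).neg.exp).const_mul (Real.exp (-A * (2:ℝ)^((n:ℝ))))
    have hFG : (fun x => KD.mbar A (Function.update p k x) n) =ᶠ[nhds (p k)]
        (fun x => Real.exp (-A * (2:ℝ)^((n:ℝ))) *
          Real.exp (-((∑ i ∈ t, w i * lz KD (Function.update p k x) (n+(i:ℤ))) + Rc))) := by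
      have hmemnh : Set.Ioo (-1:ℝ) 1 ∈ nhds (p k) := by
        apply isOpen_Ioo.mem_nhds
        constructor
        · linarith [(abs_le.1 (hp k)).1]
        · linarith [(abs_le.1 (hp k)).2]
      filter_upwards [hmemnh] with x hx
      exact hval x (abs_le.2 ⟨le_of_lt hx.1, le_of_lt hx.2⟩)
    simp only [Pi.neg_apply] at hGder
    rw [Function.update_eq_self k p] at hGder
    have hF := hGder.congr_of_eventuallyEq hFG
    refine ⟨_, hF, ?_⟩
    -- the bound
    have hmu := hval (p k) (hp1 k)
    rw [Function.update_eq_self k p] at hmu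
    have hwle : ∀ i ∈ t, w i ≤ (2:ℝ)^((n:ℝ) - (k:ℝ)) := by
      intro i hi
      rw [htdef, Finset.mem_insert, Finset.mem_singleton] at hi
      have hiZ : (k:ℤ) - 1 - n ≤ (i:ℤ) := by
        rcases hi with h | h <;> omega
      have hexp : -(1+(i:ℝ)) ≤ (n:ℝ) - (k:ℝ) := by
        have : ((k:ℤ):ℝ) - 1 - (n:ℝ) ≤ (i:ℝ) := by exact_mod_cast hiZ
        linarith
      unfold w
      exact Real.rpow_le_rpow_of_exponent_le one_le_two hexp
    have hcard : (t.card : ℝ) ≤ 2 := by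
      have := Finset.card_insert_le ((k-1-n).toNat) ({(k-n).toNat} : Finset ℕ)
      rw [htdef]
      have h2 : ({(k-n).toNat} : Finset ℕ).card = 1 := Finset.card_singleton _
      have h3 : (({(k-1-n).toNat, (k-n).toNat} : Finset ℕ)).card ≤ 2 := by
        calc _ ≤ ({(k-n).toNat} : Finset ℕ).card + 1 := this
          _ = 2 := by rw [h2]
      exact_mod_cast h3
    have habsD : |∑ i ∈ t, w i * ρ (n+(i:ℤ))| ≤ 2 * (Cρ * (2:ℝ)^((n:ℝ) - (k:ℝ))) := by
      have h1 := Finset.abs_sum_le_sum_abs (fun i => w i * ρ (n+(i:ℤ))) t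
      have h2 : ∀ i ∈ t, |w i * ρ (n+(i:ℤ))| ≤ Cρ * (2:ℝ)^((n:ℝ) - (k:ℝ)) := by
        intro i hi
        rw [abs_mul, abs_of_pos (w_pos i)]
        calc w i * |ρ (n+(i:ℤ))| ≤ (2:ℝ)^((n:ℝ) - (k:ℝ)) * Cρ :=
              mul_le_mul (hwle i hi) (hρbound _) (abs_nonneg _) (two_rpow_pos _).le
          _ = Cρ * (2:ℝ)^((n:ℝ) - (k:ℝ)) := mul_comm _ _
      have h3 := Finset.sum_le_card_nsmul t _ _ h2
      rw [nsmul_eq_mul] at h3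
      have h4 : (t.card : ℝ) * (Cρ * (2:ℝ)^((n:ℝ) - (k:ℝ))) ≤
          2 * (Cρ * (2:ℝ)^((n:ℝ) - (k:ℝ))) :=
        mul_le_mul_of_nonneg_right hcard (by positivity)
      calc |∑ i ∈ t, w i * ρ (n+(i:ℤ))| ≤ ∑ i ∈ t, |w i * ρ (n+(i:ℤ))| := h1
        _ ≤ (t.card : ℝ) * (Cρ * (2:ℝ)^((n:ℝ) - (k:ℝ))) := by exact_mod_cast h3
        _ ≤ _ := h4
    -- compute |value|
    calc |Real.exp (-A * (2:ℝ)^((n:ℝ))) *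
          (Real.exp (-((∑ i ∈ t, w i * lz KD p (n+(i:ℤ))) + Rc)) *
            (-(∑ i ∈ t, w i * ρ (n+(i:ℤ)))))|
        = (Real.exp (-A * (2:ℝ)^((n:ℝ))) *
            Real.exp (-((∑ i ∈ t, w i * lz KD p (n+(i:ℤ))) + Rc))) *
            |∑ i ∈ t, w i * ρ (n+(i:ℤ))| := by
          rw [abs_mul, abs_mul, abs_neg, abs_of_pos (Real.exp_pos _),
            abs_of_pos (Real.exp_pos _)]
          ring
      _ = KD.mbar A p n * |∑ i ∈ t, w i * ρ (n+(i:ℤ))| := by rw [← hmu]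
      _ ≤ KD.mbar A p n * (2 * (Cρ * (2:ℝ)^((n:ℝ) - (k:ℝ)))) :=
          mul_le_mul_of_nonneg_left habsD (le_of_lt (hpos n))
      _ = 2 * Cρ * (2:ℝ)^((n:ℝ) - (k:ℝ)) * KD.mbar A p n := by ring
  exact ⟨hsum, hpos, hbdd, hrec, hatBot, hatTop, hAder, hpder0, hpder1⟩
end
end
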